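/- arXiv:2310.06789 — 8 statements merged into one kernel-verified Lean document; each statement's English description precedes it below -/
import Mathlib

section
/- Let g : ℝⁿ → (-∞,∞] be proper closed convex, H a positive definite matrix, β > 0, x, y ∈ ℝⁿ, and x⁺ ∈ prox_g^H(x − H⁻¹∇f(x)). If f(x⁺) ≤ f(x) + ∇f(x)ᵀ(x⁺−x) + (β/2)‖x⁺−x‖²_H, then F(y) − F(x⁺) ≥ (1/2)‖y−x⁺‖²_H − (1/2)‖y−x‖²_H + ℓ_f(y,x) − ((β−1)/2)‖x⁺−x‖²_H, where F = f + g and ℓ_f(y,x) = f(y) − f(x) − ∇f(x)ᵀ(y−x). -/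
open scoped RealInnerProductSpace

/-- Reinterpret a plain vector as an element of Euclidean space. -/
noncomputable def toE {n : ℕ} (v : Fin n → ℝ) : EuclideanSpace ℝ (Fin n) :=
  (WithLp.equiv 2 _).symm v

/-- The squared scaled norm `‖z‖²_H = zᵀHz`. -/
noncomputable def qnorm {n : ℕ} (H : Matrix (Fin n) (Fin n) ℝ)
    (z : EuclideanSpace ℝ (Fin n)) : ℝ :=
  dotProduct (fun i => z i) (H.mulVec (fun i => z i))

/-- `xp` is a point of the scaled proximal mapping `prox_g^H(u)`, i.e. a minimizer of
`y ↦ g(y) + (1/2)‖y − u‖²_H`. -/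
def IsProxPt {n : ℕ} (g : EuclideanSpace ℝ (Fin n) → EReal)
    (H : Matrix (Fin n) (Fin n) ℝ) (u xp : EuclideanSpace ℝ (Fin n)) : Prop :=
  ∀ y, g xp + (((1:ℝ)/2 * qnorm H (xp - u) : ℝ) : EReal)
      ≤ g y + (((1:ℝ)/2 * qnorm H (y - u) : ℝ) : EReal)

section Aux
open Matrix

noncomputable def Qf {n : ℕ} (H : Matrix (Fin n) (Fin n) ℝ) (v : Fin n → ℝ) : ℝ :=
  dotProduct v (H.mulVec v)

noncomputable def Bf {n : ℕ} (H : Matrix (Fin n) (Fin n) ℝ) (v w : Fin n → ℝ) : ℝ :=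
  dotProduct v (H.mulVec w)

lemma Bf_symm {n : ℕ} {H : Matrix (Fin n) (Fin n) ℝ} (hsym : Hᵀ = H) (v w : Fin n → ℝ) :
    Bf H v w = Bf H w v := by
  unfold Bf
  rw [Matrix.dotProduct_mulVec, ← Matrix.mulVec_transpose, hsym, dotProduct_comm]

lemma Qf_expand {n : ℕ} {H : Matrix (Fin n) (Fin n) ℝ} (hsym : Hᵀ = H) (v u : Fin n → ℝ) :
    Qf H (v + u) = Qf H v + 2 * Bf H v u + Qf H u := by
  have h := Bf_symm hsym u v
  unfold Qf Bf at *
  simp only [Matrix.mulVec_add, dotProduct_add, add_dotProduct]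
  linarith

lemma Qf_expand_smul {n : ℕ} {H : Matrix (Fin n) (Fin n) ℝ} (hsym : Hᵀ = H) (t : ℝ)
    (v u : Fin n → ℝ) :
    Qf H (v + t • u) = Qf H v + 2 * t * Bf H v u + t ^ 2 * Qf H u := by
  rw [Qf_expand hsym]
  have h1 : Bf H v (t • u) = t * Bf H v u := by
    unfold Bf; rw [Matrix.mulVec_smul, dotProduct_smul]; simp
  have h2 : Qf H (t • u) = t ^ 2 * Qf H u := by
    unfold Qf
    rw [Matrix.mulVec_smul, dotProduct_smul, smul_dotProduct]
    simp [smul_smul]; ring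
  rw [h1, h2]; ring

lemma limit_step {a b c : ℝ} (hc : 0 ≤ c)
    (h : ∀ t : ℝ, 0 < t → t ≤ 1 → a ≤ b + t / 2 * c) : a ≤ b := by
  apply le_of_forall_pos_le_add
  intro ε hε
  have ht := h (min 1 (2 * ε / (c + 1))) (by positivity) (min_le_left _ _)
  have h2 : min 1 (2 * ε / (c + 1)) / 2 * c ≤ ε := by
    have h3 : min 1 (2 * ε / (c + 1)) ≤ 2 * ε / (c + 1) := min_le_right _ _
    have hc1 : (0:ℝ) < c + 1 := by linarith
    rw [div_mul_eq_mul_div, div_le_iff₀ (by norm_num)]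
    calc min 1 (2 * ε / (c + 1)) * c ≤ 2 * ε / (c + 1) * c :=
          mul_le_mul_of_nonneg_right h3 hc
      _ ≤ ε * 2 := by rw [div_mul_eq_mul_div, div_le_iff₀ hc1]; nlinarith
  linarith

end Aux

/-- fundamental prox inequality (Lemma 1 of the paper). -/
theorem stmt3 {n : ℕ} (f : EuclideanSpace ℝ (Fin n) → ℝ)
    (g : EuclideanSpace ℝ (Fin n) → EReal)
    (H : Matrix (Fin n) (Fin n) ℝ) (β : ℝ) (x y xp : EuclideanSpace ℝ (Fin n))
    (hf : Differentiable ℝ f)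
    (hg_proper : ∃ z, g z ≠ ⊤) (hg_nebot : ∀ z, g z ≠ ⊥)
    (hg_closed : LowerSemicontinuous g)
    (hg_convex : ∀ (z w : EuclideanSpace ℝ (Fin n)) (a b : ℝ), 0 ≤ a → 0 ≤ b →
      a + b = 1 → g (a • z + b • w) ≤ (a : EReal) * g z + (b : EReal) * g w)
    (hH : H.PosDef) (hβ : 0 < β)
    (hxp : IsProxPt g H (x - toE (H⁻¹.mulVec fun i => gradient f x i)) xp)
    (hls : f xp ≤ f x + ⟪gradient f x, xp - x⟫ + β / 2 * qnorm H (xp - x)) :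
    (f y : EReal) + g y - ((f xp : EReal) + g xp) ≥
      (((1:ℝ)/2 * qnorm H (y - xp) - (1:ℝ)/2 * qnorm H (y - x)
        + (f y - f x - ⟪gradient f x, y - x⟫)
        - (β - 1) / 2 * qnorm H (xp - x) : ℝ) : EReal) := by
  have hsym : H.transpose = H := by have := hH.1; simp at this; exact this
  set Gv : Fin n → ℝ := fun i => gradient f x i with hGv
  set d : Fin n → ℝ := H⁻¹.mulVec Gv with hd
  set u : EuclideanSpace ℝ (Fin n) := x - toE (H⁻¹.mulVec fun i => gradient f x i) with hu
  have hHd : H.mulVec d = Gv := by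
    rw [hd, Matrix.mulVec_mulVec,
      Matrix.mul_nonsing_inv _ (isUnit_iff_ne_zero.mpr hH.det_pos.ne'), Matrix.one_mulVec]
  set p : Fin n → ℝ := fun i => xp i - x i with hp
  set w : Fin n → ℝ := fun i => y i - x i with hw
  -- coordinate identifications
  have hvec : ∀ (a b : EuclideanSpace ℝ (Fin n)), (fun i => (a - b) i) = fun i => a i - b i :=
    fun _ _ => rfl
  have hinner : ∀ (a b : EuclideanSpace ℝ (Fin n)),
      ⟪a, b⟫ = dotProduct (fun i => a i) (fun i => b i) := by
    intro a b
    simp [PiLp.inner_apply, dotProduct, RCLike.inner_apply, mul_comm]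
  have gq1 : qnorm H (xp - x) = Qf H p := rfl
  have gq2 : qnorm H (y - x) = Qf H w := rfl
  have gq3 : qnorm H (y - xp) = Qf H (w - p) := by
    have : (fun i => (y - xp) i) = w - p := by
      funext i; show y i - xp i = w i - p i; simp [hw, hp]
    unfold qnorm; rw [this]; rfl
  have gq4 : qnorm H (xp - u) = Qf H (p + d) := by
    have : (fun i => (xp - u) i) = p + d := by
      funext i; show xp i - (x i - d i) = p i + d i; simp [hp]; ring
    unfold qnorm; rw [this]; rfl
  -- g xp is real
  obtain ⟨z, hz⟩ := hg_proper
  have hgxp_ne : g xp ≠ ⊤ := by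
    intro htop
    have h1 := hxp z
    rw [htop] at h1
    rw [EReal.top_add_coe, top_le_iff] at h1
    obtain ⟨rz, hrz⟩ : ∃ rz : ℝ, g z = (rz : EReal) :=
      ⟨_, (EReal.coe_toReal hz (hg_nebot z)).symm⟩
    rw [hrz, ← EReal.coe_add] at h1
    exact EReal.coe_ne_top _ h1
  obtain ⟨s, hs⟩ : ∃ s : ℝ, g xp = (s : EReal) :=
    ⟨_, (EReal.coe_toReal hgxp_ne (hg_nebot xp)).symm⟩
  by_cases hgy : g y = ⊤
  · rw [hgy, hs, ← EReal.coe_add, EReal.coe_add_top, EReal.top_sub_coe]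
    exact le_top
  obtain ⟨r, hr⟩ : ∃ r : ℝ, g y = (r : EReal) :=
    ⟨_, (EReal.coe_toReal hgy (hg_nebot y)).symm⟩
  have hQnn : 0 ≤ Qf H (w - p) := by simpa [Qf] using hH.posSemidef.dotProduct_mulVec_nonneg (w - p)
  have hkey : ∀ t : ℝ, 0 < t → t ≤ 1 →
      s ≤ r + Bf H (p + d) (w - p) + t / 2 * Qf H (w - p) := by
    intro t ht ht1
    have hcv := hg_convex xp y (1 - t) t (by linarith) ht.le (by ring)
    have hprox := hxp ((1 - t) • xp + t • y)
    have hq : qnorm H ((1 - t) • xp + t • y - u) = Qf H ((p + d) + t • (w - p)) := by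
      have hco : (fun i => ((1 - t) • xp + t • y - u) i) = (p + d) + t • (w - p) := by
        funext i
        show (1 - t) * xp i + t * y i - (x i - d i) = (p i + d i) + t * (w i - p i)
        simp only [hp, hw]; ring
      unfold qnorm; rw [hco]; rfl
    have hchain : g xp + (((1:ℝ)/2 * qnorm H (xp - u) : ℝ) : EReal)
        ≤ ((1 - t : ℝ) : EReal) * g xp + ((t : ℝ) : EReal) * g y
          + (((1:ℝ)/2 * qnorm H ((1 - t) • xp + t • y - u) : ℝ) : EReal) :=
      le_trans hprox (add_le_add_left hcv _)
    rw [hs, hr, ← EReal.coe_mul, ← EReal.coe_mul, ← EReal.coe_add, ← EReal.coe_add,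
      ← EReal.coe_add] at hchain
    have hreal := EReal.coe_le_coe_iff.mp hchain
    rw [gq4, hq, Qf_expand_smul hsym] at hreal
    have h' : t * s ≤ t * (r + Bf H (p + d) (w - p) + t / 2 * Qf H (w - p)) := by nlinarith
    exact le_of_mul_le_mul_left h' ht
  have hB : s ≤ r + Bf H (p + d) (w - p) := limit_step hQnn hkey
  have hIp : ⟪gradient f x, xp - x⟫ = dotProduct Gv p := hinner _ _
  have hIw : ⟪gradient f x, y - x⟫ = dotProduct Gv w := hinner _ _
  rw [hIp, gq1] at hls
  rw [hs, hr, ← EReal.coe_add, ← EReal.coe_add, ← EReal.coe_sub]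
  refine EReal.coe_le_coe_iff.mpr ?_
  rw [gq1, gq2, gq3, hIw]
  have hpw : p + (w - p) = w := by abel
  have f1 : Bf H (p + d) (w - p) = Bf H p (w - p) + dotProduct Gv (w - p) := by
    unfold Bf
    rw [add_dotProduct]
    congr 1
    rw [show dotProduct d (H.mulVec (w - p))
        = dotProduct (w - p) (H.mulVec d) from Bf_symm hsym d (w - p), hHd,
      dotProduct_comm]
  have f2 : Qf H w = Qf H p + 2 * Bf H p (w - p) + Qf H (w - p) := by
    have h := Qf_expand hsym p (w - p)
    rwa [hpw] at h
  have f3 : dotProduct Gv w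
      = dotProduct Gv p + dotProduct Gv (w - p) := by
    rw [← dotProduct_add, hpw]
  linarith
end

section
/- Let f be C² with ∇f L₁-Lipschitz, diag(∇²f(x)) ⪰ mI for some m > 0, η > 1, β > 0, and τ as defined below finite. For any x and any positive diagonal matrix D = diag(∇²f(x)), let k be any nonnegative integer with βη^k ≥ τ and x⁺ ∈ prox_g^{η^k D}(x − (η^k D)⁻¹∇f(x)). Then the backtracking acceptance criterion f(x⁺) ≤ f(x) + ∇f(x)ᵀ(x⁺−x) + (β/2)‖x⁺−x‖²_{η^k D} holds. -/
open scoped RealInnerProductSpace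

/-- Hessian quadratic form `vᵀ∇²f(x)v`. -/
noncomputable def hessQ {n : ℕ} (f : EuclideanSpace ℝ (Fin n) → ℝ)
    (x v : EuclideanSpace ℝ (Fin n)) : ℝ :=
  ⟪fderiv ℝ (gradient f) x v, v⟫

/-- The `i`-th diagonal entry of the Hessian of `f` at `x`. -/
noncomputable def hessDiag {n : ℕ} (f : EuclideanSpace ℝ (Fin n) → ℝ)
    (x : EuclideanSpace ℝ (Fin n)) (i : Fin n) : ℝ :=
  ⟪fderiv ℝ (gradient f) x (EuclideanSpace.single i (1 : ℝ)),
    EuclideanSpace.single i (1 : ℝ)⟫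

/-- Quadratic form `vᵀ diag(∇²f(x)) v`. -/
noncomputable def diagQ {n : ℕ} (f : EuclideanSpace ℝ (Fin n) → ℝ)
    (x v : EuclideanSpace ℝ (Fin n)) : ℝ :=
  ∑ i, hessDiag f x i * (v i) ^ 2

/-- Second-order mean-value-type helper: if `ψ` is the derivative of `φ` and `χ` that of `ψ`,
and `χ ≤ M` on `[0,1]`, then `φ 1 ≤ φ 0 + ψ 0 + M/2`. -/
lemma taylor_aux (φ ψ χ : ℝ → ℝ) (M : ℝ)
    (hφ : ∀ t, HasDerivAt φ (ψ t) t)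
    (hψ : ∀ t, HasDerivAt ψ (χ t) t)
    (hχ : ∀ t ∈ Set.Icc (0:ℝ) 1, χ t ≤ M) :
    φ 1 ≤ φ 0 + ψ 0 + M / 2 := by
  have step1 : ∀ t ∈ Set.Icc (0:ℝ) 1, ψ t ≤ ψ 0 + M * t := by
    intro t ht
    set h : ℝ → ℝ := fun s => ψ s - M * s with hh
    have hder : ∀ s, HasDerivAt h (χ s - M) s := fun s =>
      (hψ s).sub (by simpa using (hasDerivAt_id s).const_mul M)
    have hanti : AntitoneOn h (Set.Icc 0 1) := by
      apply antitoneOn_of_deriv_nonpos (convex_Icc 0 1)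
      · exact fun s _ => ((hder s).continuousAt).continuousWithinAt
      · intro s hs
        exact ((hder s).differentiableAt).differentiableWithinAt
      · intro s hs
        rw [(hder s).deriv]
        rw [interior_Icc] at hs
        have := hχ s ⟨le_of_lt hs.1, le_of_lt hs.2⟩
        linarith
    have := hanti (Set.left_mem_Icc.mpr zero_le_one) ht ht.1
    simp only [hh, mul_zero, sub_zero] at this
    linarith
  set G : ℝ → ℝ := fun s => φ s - ψ 0 * s - M * s ^ 2 / 2 with hG
  have hder : ∀ s, HasDerivAt G (ψ s - ψ 0 - M * s) s := by
    intro s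
    have h1 : HasDerivAt (fun s : ℝ => ψ 0 * s) (ψ 0) s := by
      simpa using (hasDerivAt_id s).const_mul (ψ 0)
    have h2 : HasDerivAt (fun s : ℝ => M * s ^ 2 / 2) (M * s) s := by
      have := ((hasDerivAt_pow 2 s).const_mul M).div_const 2
      exact this.congr_deriv (by norm_num; ring)
    exact ((hφ s).sub h1).sub h2
  have hanti : AntitoneOn G (Set.Icc 0 1) := by
    apply antitoneOn_of_deriv_nonpos (convex_Icc 0 1)
    · exact fun s _ => ((hder s).continuousAt).continuousWithinAt
    · intro s hs
      exact ((hder s).differentiableAt).differentiableWithinAt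
    · intro s hs
      rw [(hder s).deriv]
      rw [interior_Icc] at hs
      have := step1 s ⟨le_of_lt hs.1, le_of_lt hs.2⟩
      linarith
  have := hanti (Set.left_mem_Icc.mpr zero_le_one) (Set.right_mem_Icc.mpr zero_le_one) zero_le_one
  simp only [hG, mul_zero, sub_zero, one_pow, mul_one] at this
  linarith

lemma qnorm_smul_diagonal {n : ℕ} (f : EuclideanSpace ℝ (Fin n) → ℝ)
    (x z : EuclideanSpace ℝ (Fin n)) (c : ℝ) :
    qnorm (c • Matrix.diagonal (hessDiag f x)) z = c * diagQ f x z := by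
  unfold qnorm diagQ dotProduct
  rw [Finset.mul_sum]
  apply Finset.sum_congr rfl
  intro i _
  simp [Matrix.smul_mulVec, Matrix.mulVec_diagonal]
  ring

/-- if `βη^k ≥ τ` then the backtracking acceptance criterion holds for
`x⁺ ∈ prox_g^{η^k D}(x − (η^k D)⁻¹∇f(x))` with `D = diag(∇²f(x))`. -/
theorem stmt5 {n : ℕ} (f : EuclideanSpace ℝ (Fin n) → ℝ)
    (g : EuclideanSpace ℝ (Fin n) → EReal)
    (L₁ m η β τ : ℝ) (k : ℕ) (x xp : EuclideanSpace ℝ (Fin n))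
    (hf : ContDiff ℝ 2 f)
    (hlip : ∀ x y : EuclideanSpace ℝ (Fin n),
      ‖gradient f x - gradient f y‖ ≤ L₁ * ‖x - y‖)
    (hm : 0 < m)
    (hdiag : ∀ (z v : EuclideanSpace ℝ (Fin n)), m * ‖v‖ ^ 2 ≤ diagQ f z v)
    (hη : 1 < η) (hβ : 0 < β)
    (hτ : IsLUB {r : ℝ | ∃ (z v : EuclideanSpace ℝ (Fin n)) (lam : ℝ),
      v ≠ 0 ∧ lam ∈ Set.Icc (0:ℝ) 1 ∧
      r = hessQ f (z + lam • v) v / diagQ f z v} τ)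
    (hg_proper : ∃ z, g z ≠ ⊤) (hg_nebot : ∀ z, g z ≠ ⊥)
    (hg_closed : LowerSemicontinuous g)
    (hk : β * η ^ k ≥ τ)
    (hxp : IsProxPt g (η ^ k • Matrix.diagonal (hessDiag f x))
      (x - toE ((η ^ k • Matrix.diagonal (hessDiag f x))⁻¹.mulVec
        fun i => gradient f x i)) xp) :
    f xp ≤ f x + ⟪gradient f x, xp - x⟫
      + β / 2 * qnorm (η ^ k • Matrix.diagonal (hessDiag f x)) (xp - x) := by
  set v : EuclideanSpace ℝ (Fin n) := xp - x with hv
  rw [qnorm_smul_diagonal]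
  by_cases hv0 : v = 0
  · rw [hv, sub_eq_zero] at hv0
    subst hv0
    simp [diagQ, hv, sub_self]
  -- gradient is C¹
  have hgrad : ContDiff ℝ 1 (gradient f) := by
    have h1 : ContDiff ℝ 1 (fderiv ℝ f) := hf.fderiv_right (by norm_num)
    have h2 : gradient f = fun z =>
        (InnerProductSpace.toDual ℝ (EuclideanSpace ℝ (Fin n))).symm (fderiv ℝ f z) := rfl
    rw [h2]
    exact (InnerProductSpace.toDual ℝ (EuclideanSpace ℝ (Fin n))).symm.contDiff.comp h1
  set γ : ℝ → EuclideanSpace ℝ (Fin n) := fun t => x + t • v with hγdef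
  have hγ : ∀ t : ℝ, HasDerivAt γ v t := by
    intro t
    have := ((hasDerivAt_id t).smul_const v).const_add x
    rw [one_smul] at this
    exact this
  set φ : ℝ → ℝ := fun t => f (γ t) with hφdef
  set ψ : ℝ → ℝ := fun t => ⟪gradient f (γ t), v⟫ with hψdef
  set χ : ℝ → ℝ := fun t => hessQ f (γ t) v with hχdef
  have hφψ : ∀ t, HasDerivAt φ (ψ t) t := by
    intro t
    have hdf : HasFDerivAt f (fderiv ℝ f (γ t)) (γ t) :=
      (hf.differentiable (by norm_num) (γ t)).hasFDerivAt
    have := hdf.comp_hasDerivAt t (hγ t)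
    have heq : fderiv ℝ f (γ t) v = ⟪gradient f (γ t), v⟫ := by
      rw [gradient]
      exact (InnerProductSpace.toDual_symm_apply).symm
    rw [heq] at this
    exact this
  have hψχ : ∀ t, HasDerivAt ψ (χ t) t := by
    intro t
    have hdg : HasFDerivAt (gradient f) (fderiv ℝ (gradient f) (γ t)) (γ t) :=
      (hgrad.differentiable one_ne_zero (γ t)).hasFDerivAt
    have h1 := hdg.comp_hasDerivAt t (hγ t)
    have h2 := h1.inner (𝕜 := ℝ) (hasDerivAt_const t v)
    rw [inner_zero_right, zero_add] at h2
    exact h2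
  have hDpos : 0 < diagQ f x v :=
    lt_of_lt_of_le (mul_pos hm (pow_pos (norm_pos_iff.mpr hv0) 2)) (hdiag x v)
  have hχM : ∀ t ∈ Set.Icc (0:ℝ) 1, χ t ≤ β * η ^ k * diagQ f x v := by
    intro t ht
    have hmem : hessQ f (x + t • v) v / diagQ f x v ∈
        {r : ℝ | ∃ (z v' : EuclideanSpace ℝ (Fin n)) (lam : ℝ),
          v' ≠ 0 ∧ lam ∈ Set.Icc (0:ℝ) 1 ∧
          r = hessQ f (z + lam • v') v' / diagQ f z v'} :=
      ⟨x, v, t, hv0, ht, rfl⟩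
    have hle : hessQ f (x + t • v) v / diagQ f x v ≤ τ := hτ.1 hmem
    have : hessQ f (x + t • v) v ≤ τ * diagQ f x v := by
      rw [div_le_iff₀ hDpos] at hle; exact hle
    calc χ t = hessQ f (x + t • v) v := rfl
      _ ≤ τ * diagQ f x v := this
      _ ≤ β * η ^ k * diagQ f x v :=
        mul_le_mul_of_nonneg_right hk hDpos.le
  have key := taylor_aux φ ψ χ (β * η ^ k * diagQ f x v) hφψ hψχ hχM
  have hγ1 : γ 1 = xp := by simp [hγdef, hv]
  have hγ0 : γ 0 = x := by simp [hγdef]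
  have e1 : φ 1 = f xp := by rw [hφdef]; simp [hγ1]
  have e0 : φ 0 = f x := by rw [hφdef]; simp [hγ0]
  have eψ : ψ 0 = ⟪gradient f x, xp - x⟫ := by rw [hψdef]; simp [hγ0, hv]
  rw [e1, e0, eψ] at key
  calc f xp ≤ f x + ⟪gradient f x, xp - x⟫ + β * η ^ k * diagQ f x v / 2 := key
    _ = f x + ⟪gradient f x, xp - x⟫ + β / 2 * (η ^ k * diagQ f x (xp - x)) := by
        rw [← hv]; ring
end

section
/- Under the same setting as the sufficient decrease lemma but with g additionally convex and 0 < β < 2, one has the stronger inequality F(x^{t+1}) ≤ F(x^t) − ((2−β)/2)‖x^{t+1}−x^t‖²_H. -/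
open scoped RealInnerProductSpace

lemma limit_aux {x y c : ℝ} (h : ∀ a : ℝ, 0 < a → a ≤ 1 → x ≤ y + a * c) : x ≤ y := by
  rcases le_or_gt c 0 with hc | hc
  · have := h 1 one_pos le_rfl; linarith
  · apply le_of_forall_pos_le_add
    intro ε hε
    rcases le_or_gt (ε / c) 1 with hle | hlt
    · have h1 := h (ε/c) (div_pos hε hc) hle
      have h2 : (ε/c)*c = ε := div_mul_cancel₀ _ (ne_of_gt hc)
      linarith
    · have h1 := h 1 one_pos le_rfl
      have h2 : c < ε := (one_lt_div hc).mp hlt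
      linarith

lemma dot_expand {n : ℕ} (H : Matrix (Fin n) (Fin n) ℝ) (hs : H.transpose = H) (v d : Fin n → ℝ) (a : ℝ) :
    dotProduct (v + a • d) (H.mulVec (v + a • d)) =
      dotProduct v (H.mulVec v) + 2*a* dotProduct v (H.mulVec d)
      + a^2 * dotProduct d (H.mulVec d) := by
  have hsym : dotProduct d (H.mulVec v) = dotProduct v (H.mulVec d) := by
    rw [Matrix.dotProduct_mulVec, ← Matrix.mulVec_transpose, hs, dotProduct_comm]
  simp [Matrix.mulVec_add, Matrix.mulVec_smul, dotProduct_add, add_dotProduct,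
    dotProduct_smul, smul_dotProduct, hsym, smul_eq_mul]
  ring

/-- with `g` additionally convex and `0 < β < 2`, the stronger decrease
`F(x⁺) ≤ F(x) − ((2−β)/2)‖x⁺−x‖²_H` holds. -/
theorem stmt8 {n : ℕ} (f : EuclideanSpace ℝ (Fin n) → ℝ)
    (g : EuclideanSpace ℝ (Fin n) → EReal)
    (H : Matrix (Fin n) (Fin n) ℝ) (β : ℝ) (xt xp : EuclideanSpace ℝ (Fin n))
    (hf : Differentiable ℝ f)
    (hg_proper : ∃ z, g z ≠ ⊤) (hg_nebot : ∀ z, g z ≠ ⊥)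
    (hg_closed : LowerSemicontinuous g)
    (hg_convex : ∀ (z w : EuclideanSpace ℝ (Fin n)) (a b : ℝ), 0 ≤ a → 0 ≤ b →
      a + b = 1 → g (a • z + b • w) ≤ (a : EReal) * g z + (b : EReal) * g w)
    (hH : H.PosDef) (hβ0 : 0 < β) (hβ2 : β < 2)
    (hxp : IsProxPt g H (xt - toE (H⁻¹.mulVec fun i => gradient f xt i)) xp)
    (hls : f xp ≤ f xt + ⟪gradient f xt, xp - xt⟫ + β / 2 * qnorm H (xp - xt)) :
    (f xp : EReal) + g xp ≤
      (f xt : EReal) + g xt - (((2 - β) / 2 * qnorm H (xp - xt) : ℝ) : EReal) := by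
  classical
  have hs : H.transpose = H := by
    have := hH.1
    simpa [Matrix.IsHermitian, Matrix.conjTranspose_eq_transpose_of_trivial] using this
  have hdet : IsUnit H.det := isUnit_iff_ne_zero.mpr (ne_of_gt hH.det_pos)
  set grad : Fin n → ℝ := fun i => gradient f xt i with hgrad
  set m : Fin n → ℝ := H⁻¹.mulVec grad with hm
  set u : EuclideanSpace ℝ (Fin n) := xt - toE m with hu
  -- g xp is real
  have hgp_top : g xp ≠ ⊤ := by
    intro htop
    obtain ⟨z, hz⟩ := hg_proper
    have h1 := hxp z
    rw [htop] at h1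
    have h2 : (⊤ : EReal) + (((1:ℝ)/2 * qnorm H (xp - u) : ℝ) : EReal) = ⊤ :=
      EReal.top_add_of_ne_bot (EReal.coe_ne_bot _)
    rw [h2, top_le_iff] at h1
    have h3 : g z = ⊤ := by
      by_contra hne
      exact (EReal.add_lt_top hne (EReal.coe_ne_top _)).ne h1
    exact hz h3
  set gp : ℝ := (g xp).toReal with hgpdef
  have hgp : (gp : EReal) = g xp := EReal.coe_toReal hgp_top (hg_nebot xp)
  by_cases hgt_top : g xt = ⊤
  · rw [hgt_top]
    have : (f xt : EReal) + ⊤ - (((2 - β) / 2 * qnorm H (xp - xt) : ℝ) : EReal) = ⊤ := by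
      rw [EReal.add_top_of_ne_bot (EReal.coe_ne_bot _), EReal.top_sub_coe]
    rw [this]
    exact le_top
  set gt : ℝ := (g xt).toReal with hgtdef
  have hgt : (gt : EReal) = g xt := EReal.coe_toReal hgt_top (hg_nebot xt)
  -- vectors
  set w : Fin n → ℝ := fun i => xp i - xt i with hw
  set v : Fin n → ℝ := fun i => xp i - u i with hv
  set d : Fin n → ℝ := fun i => xt i - xp i with hd
  have hfv : (fun i => (xp - u) i) = v := by funext i; simp [hv]
  have hfw : (fun i => (xp - xt) i) = w := by funext i; simp [hw]
  have hQ : qnorm H (xp - u) = dotProduct v (H.mulVec v) := by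
    unfold qnorm; rw [hfv]
  have hQxt : qnorm H (xp - xt) = dotProduct w (H.mulVec w) := by
    unfold qnorm; rw [hfw]
  set C : ℝ := dotProduct v (H.mulVec d) with hC
  set D : ℝ := dotProduct d (H.mulVec d) with hD
  -- key inequality from prox + convexity, for each a ∈ (0,1]
  have hkey : ∀ a : ℝ, 0 < a → a ≤ 1 → gp ≤ (gt + C) + a * (D/2) := by
    intro a ha0 ha1
    set ya : EuclideanSpace ℝ (Fin n) := a • xt + (1-a) • xp with hya
    have hconv := hg_convex xt xp a (1-a) (le_of_lt ha0) (by linarith) (by ring)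
    have hprox := hxp ya
    have hcomp : (fun i => (ya - u) i) = v + a • d := by
      funext i
      simp [hya, hv, hd, hu, toE, Pi.smul_apply, smul_eq_mul]
      ring
    have hQya : qnorm H (ya - u) = dotProduct v (H.mulVec v) + 2*a*C + a^2*D := by
      unfold qnorm
      rw [show (H.mulVec fun i => (ya - u) i) = H.mulVec (v + a • d) by rw [hcomp]]
      rw [show (fun i => (ya - u) i) = v + a • d from hcomp]
      exact dot_expand H hs v d a
    -- convert to reals
    rw [← hgp] at hprox
    rw [← hgp, ← hgt] at hconv
    have h2 : g ya ≤ ((a * gt + (1-a) * gp : ℝ) : EReal) := by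
      calc g ya ≤ (a : EReal) * (gt:EReal) + ((1-a : ℝ) : EReal) * (gp:EReal) := hconv
        _ = ((a * gt + (1-a) * gp : ℝ) : EReal) := by
            rw [← EReal.coe_mul, ← EReal.coe_mul, ← EReal.coe_add]
    have h3 : (gp:EReal) + (((1:ℝ)/2 * qnorm H (xp - u) : ℝ) : EReal)
        ≤ ((a * gt + (1-a) * gp : ℝ) : EReal) + (((1:ℝ)/2 * qnorm H (ya - u) : ℝ) : EReal) :=
      hprox.trans (add_le_add_left h2 _)
    rw [← EReal.coe_add, ← EReal.coe_add, EReal.coe_le_coe_iff] at h3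
    rw [hQya, hQ] at h3
    have h4 : a * gp ≤ a * ((gt + C) + a * (D/2)) := by nlinarith
    exact le_of_mul_le_mul_left h4 ha0
  have hgle : gp ≤ gt + C := limit_aux hkey
  -- compute C
  have hsym : ∀ x y : Fin n → ℝ, dotProduct x (H.mulVec y) = dotProduct y (H.mulVec x) := by
    intro x y
    rw [Matrix.dotProduct_mulVec, ← Matrix.mulVec_transpose, hs, dotProduct_comm]
  have hHm : H.mulVec m = grad := by
    rw [hm, Matrix.mulVec_mulVec, Matrix.mul_nonsing_inv H hdet, Matrix.one_mulVec]
  have hveq : v = w + m := by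
    funext i; simp [hv, hw, hu, toE]; ring
  have hdeq : d = -w := by
    funext i; simp [hd, hw]
  have hCval : C = -(dotProduct w (H.mulVec w)) - dotProduct grad w := by
    rw [hC, hveq, hdeq]
    have h1 : dotProduct m (H.mulVec (-w)) = - dotProduct grad w := by
      rw [Matrix.mulVec_neg, dotProduct_neg, hsym m w, hHm, dotProduct_comm]
    rw [add_dotProduct, h1, Matrix.mulVec_neg, dotProduct_neg]
    ring
  have hinner : ⟪gradient f xt, xp - xt⟫ = dotProduct grad w := by
    rw [PiLp.inner_apply]
    simp [dotProduct, hgrad, hw, mul_comm]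
  -- final real inequality
  have hfinal : f xp + gp ≤ f xt + gt - (2 - β) / 2 * qnorm H (xp - xt) := by
    rw [hQxt] at hls ⊢
    rw [hinner] at hls
    rw [hCval] at hgle
    linarith
  rw [← hgp, ← hgt, ← EReal.coe_add, ← EReal.coe_add, ← EReal.coe_sub, EReal.coe_le_coe_iff]
  exact hfinal
end

section
/- Let f(x) = (1/2)xᵀQx + lᵀx with Q positive semidefinite, D = diag(Q) with all diagonal entries positive, g proper closed convex, F = f + g, and suppose an optimal solution x* of min F exists. Let {x^t} be generated by the PDNM with 0 < β ≤ 1. Then F(x^t) − F(x*) ≤ M‖x⁰−x*‖²_{D'} / (2t) for all t ≥ 1, where M = max{1, ητ/β}·L₁, D' = D / max_i D_{i,i}, and L₁ is the Lipschitz constant of ∇f. -/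
open scoped RealInnerProductSpace

/-- The quadratic function `f(x) = (1/2)xᵀQx + lᵀx`. -/
noncomputable def fquad {n : ℕ} (Q : Matrix (Fin n) (Fin n) ℝ) (l : Fin n → ℝ)
    (x : EuclideanSpace ℝ (Fin n)) : ℝ :=
  (1:ℝ)/2 * qnorm Q x + dotProduct l (fun i => x i)

/-- Its gradient `∇f(x) = Qx + l`. -/
noncomputable def gradquad {n : ℕ} (Q : Matrix (Fin n) (Fin n) ℝ) (l : Fin n → ℝ)
    (x : EuclideanSpace ℝ (Fin n)) : EuclideanSpace ℝ (Fin n) :=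
  toE (Q.mulVec (fun i => x i) + l)

namespace Stmt9Aux
variable {n : ℕ}

noncomputable def bform (H : Matrix (Fin n) (Fin n) ℝ) (z w : EuclideanSpace ℝ (Fin n)) : ℝ :=
  dotProduct (fun i => z i) (H.mulVec fun i => w i)

lemma pv_add (z w : EuclideanSpace ℝ (Fin n)) :
    (fun i => (z + w) i) = (fun i => z i) + fun i => w i := rfl
lemma pv_sub (z w : EuclideanSpace ℝ (Fin n)) :
    (fun i => (z - w) i) = (fun i => z i) - fun i => w i := rfl
lemma pv_smul (a : ℝ) (z : EuclideanSpace ℝ (Fin n)) :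
    (fun i => (a • z) i) = a • fun i => z i := rfl
lemma pv_zero : (fun i => (0 : EuclideanSpace ℝ (Fin n)) i) = 0 := rfl
lemma pv_neg (z : EuclideanSpace ℝ (Fin n)) :
    (fun i => (-z) i) = -fun i => z i := rfl
lemma pv_toE (v : Fin n → ℝ) : (fun i => toE v i) = v := rfl

lemma qnorm_bform (H : Matrix (Fin n) (Fin n) ℝ) (z : EuclideanSpace ℝ (Fin n)) :
    qnorm H z = bform H z z := rfl

lemma bform_symm {H : Matrix (Fin n) (Fin n) ℝ} (hH : H.IsSymm)
    (z w : EuclideanSpace ℝ (Fin n)) : bform H z w = bform H w z := by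
  unfold bform
  rw [Matrix.dotProduct_mulVec, ← Matrix.mulVec_transpose, hH.eq, dotProduct_comm]

lemma bform_add_left (H : Matrix (Fin n) (Fin n) ℝ) (z z' w : EuclideanSpace ℝ (Fin n)) :
    bform H (z + z') w = bform H z w + bform H z' w := by
  unfold bform; rw [pv_add, add_dotProduct]
lemma bform_add_right (H : Matrix (Fin n) (Fin n) ℝ) (z w w' : EuclideanSpace ℝ (Fin n)) :
    bform H z (w + w') = bform H z w + bform H z w' := by
  unfold bform; rw [pv_add, Matrix.mulVec_add, dotProduct_add]
lemma bform_sub_left (H : Matrix (Fin n) (Fin n) ℝ) (z z' w : EuclideanSpace ℝ (Fin n)) :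
    bform H (z - z') w = bform H z w - bform H z' w := by
  unfold bform; rw [pv_sub, sub_dotProduct]
lemma bform_sub_right (H : Matrix (Fin n) (Fin n) ℝ) (z w w' : EuclideanSpace ℝ (Fin n)) :
    bform H z (w - w') = bform H z w - bform H z w' := by
  unfold bform; rw [pv_sub, Matrix.mulVec_sub, dotProduct_sub]
lemma bform_smul_left (H : Matrix (Fin n) (Fin n) ℝ) (a : ℝ) (z w : EuclideanSpace ℝ (Fin n)) :
    bform H (a • z) w = a * bform H z w := by
  unfold bform; rw [pv_smul, smul_dotProduct]; rfl
lemma bform_smul_right (H : Matrix (Fin n) (Fin n) ℝ) (a : ℝ) (z w : EuclideanSpace ℝ (Fin n)) :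
    bform H z (a • w) = a * bform H z w := by
  unfold bform; rw [pv_smul, Matrix.mulVec_smul, dotProduct_smul]; rfl

lemma qnorm_add {H : Matrix (Fin n) (Fin n) ℝ} (hH : H.IsSymm)
    (z w : EuclideanSpace ℝ (Fin n)) :
    qnorm H (z + w) = qnorm H z + 2 * bform H z w + qnorm H w := by
  simp only [qnorm_bform, bform_add_left, bform_add_right]
  rw [bform_symm hH w z]; ring

lemma qnorm_smulM (c : ℝ) (H : Matrix (Fin n) (Fin n) ℝ) (z : EuclideanSpace ℝ (Fin n)) :
    qnorm (c • H) z = c * qnorm H z := by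
  unfold qnorm
  rw [Matrix.smul_mulVec, dotProduct_smul]; rfl

lemma qnorm_zero (H : Matrix (Fin n) (Fin n) ℝ) :
    qnorm H (0 : EuclideanSpace ℝ (Fin n)) = 0 := by
  unfold qnorm; rw [pv_zero]; simp

lemma qnorm_neg (H : Matrix (Fin n) (Fin n) ℝ) (z : EuclideanSpace ℝ (Fin n)) :
    qnorm H (-z) = qnorm H z := by
  unfold qnorm; rw [pv_neg]
  simp [Matrix.mulVec_neg, dotProduct_neg, neg_dotProduct]

lemma qnorm_combo {H : Matrix (Fin n) (Fin n) ℝ} (hH : H.IsSymm) (a : ℝ)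
    (y xp u : EuclideanSpace ℝ (Fin n)) :
    qnorm H (a • y + (1 - a) • xp - u)
      = a * qnorm H (y - u) + (1 - a) * qnorm H (xp - u) - a * (1 - a) * qnorm H (y - xp) := by
  have e : a • y + (1 - a) • xp - u = a • (y - u) + (1 - a) • (xp - u) := by
    rw [smul_sub, smul_sub, show ((1:ℝ) - a) • u = u - a • u by rw [sub_smul, one_smul]]
    abel
  have e2 : y - xp = (y - u) - (xp - u) := by abel
  rw [e, e2]
  simp only [qnorm_bform, bform_add_left, bform_add_right, bform_sub_left, bform_sub_right,
    bform_smul_left, bform_smul_right]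
  rw [bform_symm hH u y, bform_symm hH u xp, bform_symm hH xp y]
  ring

lemma inner_toE (v : Fin n → ℝ) (z : EuclideanSpace ℝ (Fin n)) :
    ⟪toE v, z⟫ = dotProduct (fun i => z i) v := by
  simp [toE, PiLp.inner_apply, dotProduct, mul_comm]

lemma qdiag_eq (d : Fin n → ℝ) (z : EuclideanSpace ℝ (Fin n)) :
    qnorm (Matrix.diagonal d) z = ∑ i, d i * (z i * z i) := by
  unfold qnorm
  simp [dotProduct, Matrix.mulVec_diagonal]
  exact Finset.sum_congr rfl fun i _ => by ring

lemma qdiag_nonneg {d : Fin n → ℝ} (hd : ∀ i, 0 ≤ d i) (z : EuclideanSpace ℝ (Fin n)) :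
    0 ≤ qnorm (Matrix.diagonal d) z := by
  rw [qdiag_eq]
  exact Finset.sum_nonneg fun i _ => mul_nonneg (hd i) (mul_self_nonneg _)

lemma qdiag_pos {d : Fin n → ℝ} (hd : ∀ i, 0 < d i) {z : EuclideanSpace ℝ (Fin n)}
    (hz : z ≠ 0) : 0 < qnorm (Matrix.diagonal d) z := by
  obtain ⟨i0, hi0⟩ : ∃ i, z i ≠ 0 := by
    by_contra h; push_neg at h; exact hz (PiLp.ext h)
  rw [qdiag_eq]
  exact Finset.sum_pos' (fun i _ => mul_nonneg (hd i).le (mul_self_nonneg _))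
    ⟨i0, Finset.mem_univ _, mul_pos (hd i0) (mul_self_pos.mpr hi0)⟩

lemma fquad_expand {Q : Matrix (Fin n) (Fin n) ℝ} (hQs : Q.IsSymm) (l : Fin n → ℝ)
    (xx d : EuclideanSpace ℝ (Fin n)) :
    fquad Q l (xx + d) = fquad Q l xx + ⟪gradquad Q l xx, d⟫ + 1/2 * qnorm Q d := by
  unfold fquad gradquad
  rw [inner_toE, qnorm_add hQs, pv_add, dotProduct_add, dotProduct_add,
    dotProduct_comm (fun i => d i) l,
    show dotProduct (fun i => d i) (Q.mulVec fun i => xx i) = bform Q d xx from rfl,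
    bform_symm hQs d xx]
  ring

lemma prox3 (g : EuclideanSpace ℝ (Fin n) → EReal)
    (hg_nebot : ∀ z, g z ≠ ⊥)
    (hg_convex : ∀ (z w : EuclideanSpace ℝ (Fin n)) (a b : ℝ), 0 ≤ a → 0 ≤ b →
      a + b = 1 → g (a • z + b • w) ≤ (a : EReal) * g z + (b : EReal) * g w)
    {H : Matrix (Fin n) (Fin n) ℝ} (hH : H.IsSymm) (hHpos : ∀ z, 0 ≤ qnorm H z)
    (u xp : EuclideanSpace ℝ (Fin n)) (hp : IsProxPt g H u xp) (hxp : g xp ≠ ⊤)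
    (y : EuclideanSpace ℝ (Fin n)) (hy : g y ≠ ⊤) :
    (g xp).toReal + 1/2 * qnorm H (xp - u) + 1/2 * qnorm H (y - xp)
      ≤ (g y).toReal + 1/2 * qnorm H (y - u) := by
  set A := (g xp).toReal with hA
  set B := (g y).toReal with hB
  have hgxp : g xp = (A : EReal) := (EReal.coe_toReal hxp (hg_nebot xp)).symm
  have hgy : g y = (B : EReal) := (EReal.coe_toReal hy (hg_nebot y)).symm
  set q1 := qnorm H (xp - u) with hq1
  set q2 := qnorm H (y - u) with hq2
  set q3 := qnorm H (y - xp) with hq3d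
  have hq3 : 0 ≤ q3 := hHpos _
  have main : ∀ a : ℝ, 0 < a → a < 1 →
      A + 1/2*q1 + 1/2*q3 ≤ B + 1/2*q2 + a * (q3/2) := by
    intro a ha0 ha1
    have hconv := hg_convex y xp a (1-a) ha0.le (by linarith) (by ring)
    have hRHS : (a : EReal) * g y + ((1-a : ℝ) : EReal) * g xp
        = ((a*B + (1-a)*A : ℝ) : EReal) := by
      rw [hgxp, hgy, ← EReal.coe_mul, ← EReal.coe_mul, ← EReal.coe_add]
    rw [hRHS] at hconv
    have hya_top : g (a • y + (1-a) • xp) ≠ ⊤ := by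
      intro h; rw [h] at hconv
      exact absurd hconv (not_le.mpr (EReal.coe_lt_top _))
    set C := (g (a • y + (1-a) • xp)).toReal with hC
    have hgya : g (a • y + (1-a) • xp) = (C : EReal) :=
      (EReal.coe_toReal hya_top (hg_nebot _)).symm
    rw [hgya] at hconv
    have hCle : C ≤ a*B + (1-a)*A := by exact_mod_cast hconv
    have hprox' := hp (a • y + (1-a) • xp)
    rw [hgxp, hgya, ← EReal.coe_add, ← EReal.coe_add] at hprox'
    have hprox'' : A + 1/2 * q1 ≤ C + 1/2 * qnorm H (a • y + (1-a) • xp - u) := by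
      exact_mod_cast hprox'
    rw [qnorm_combo hH a y xp u, ← hq1, ← hq2, ← hq3d] at hprox''
    have h2 : a * (A + 1/2*q1 + 1/2*q3 - (B + 1/2*q2 + a*(q3/2))) ≤ 0 := by nlinarith
    by_contra hc; push_neg at hc
    nlinarith [mul_pos ha0
      (by linarith : (0:ℝ) < A + 1/2*q1 + 1/2*q3 - (B + 1/2*q2 + a*(q3/2)))]
  by_contra hc; push_neg at hc
  set X0 := A + 1/2*q1 + 1/2*q3 - (B + 1/2*q2) with hX0
  have hX0pos : 0 < X0 := by simp only [hX0]; linarith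
  set a := min (1/2 : ℝ) (X0 / (q3 + 1)) with ha
  have ha0 : 0 < a := lt_min (by norm_num) (div_pos hX0pos (by linarith))
  have ha1 : a < 1 := lt_of_le_of_lt (min_le_left _ _) (by norm_num)
  have h := main a ha0 ha1
  have haX : a ≤ X0/(q3+1) := min_le_right _ _
  have hlt : a * (q3/2) < X0 := by
    calc a * (q3/2) ≤ (X0/(q3+1)) * (q3/2) :=
          mul_le_mul_of_nonneg_right haX (by linarith)
    _ < X0 := by
          rw [div_mul_eq_mul_div, div_lt_iff₀ (by linarith : (0:ℝ) < q3 + 1)]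
          nlinarith
  simp only [hX0] at hlt
  linarith

end Stmt9Aux

/-- `O(1/t)` sublinear convergence of PDNM for a convex quadratic `f`
with positive diagonal: `F(x^t) − F(x*) ≤ M‖x⁰−x*‖²_{D'}/(2t)` with
`M = max{1, ητ/β}L₁` and `D' = D / maxᵢ Dᵢᵢ`. -/
theorem stmt9 {n : ℕ} (hn : 0 < n) (Q : Matrix (Fin n) (Fin n) ℝ) (l : Fin n → ℝ)
    (g : EuclideanSpace ℝ (Fin n) → EReal)
    (η β τ L₁ : ℝ) (x : ℕ → EuclideanSpace ℝ (Fin n))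
    (xcand : ℕ → ℕ → EuclideanSpace ℝ (Fin n)) (k : ℕ → ℕ)
    (xstar : EuclideanSpace ℝ (Fin n))
    (hQ : Q.PosSemidef) (hQd : ∀ i, 0 < Q i i)
    (hg_proper : ∃ z, g z ≠ ⊤) (hg_nebot : ∀ z, g z ≠ ⊥)
    (hg_closed : LowerSemicontinuous g)
    (hg_convex : ∀ (z w : EuclideanSpace ℝ (Fin n)) (a b : ℝ), 0 ≤ a → 0 ≤ b →
      a + b = 1 → g (a • z + b • w) ≤ (a : EReal) * g z + (b : EReal) * g w)
    (hη : 1 < η) (hβ0 : 0 < β) (hβ1 : β ≤ 1)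
    (hτ : IsLUB {r : ℝ | ∃ v : Fin n → ℝ, v ≠ 0 ∧
      r = dotProduct v (Q.mulVec v) /
        dotProduct v ((Matrix.diagonal fun i => Q i i).mulVec v)} τ)
    (hlip : ∀ z w : EuclideanSpace ℝ (Fin n),
      ‖gradquad Q l z - gradquad Q l w‖ ≤ L₁ * ‖z - w‖)
    (hprox : ∀ (t j : ℕ),
      IsProxPt g (η ^ j • Matrix.diagonal fun i => Q i i)
        (x t - toE ((η ^ j • Matrix.diagonal fun i => Q i i)⁻¹.mulVec
          fun i => gradquad Q l (x t) i)) (xcand t j))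
    (hstep : ∀ t : ℕ, x (t + 1) = xcand t (k t))
    (haccept : ∀ t : ℕ,
      fquad Q l (xcand t (k t)) ≤ fquad Q l (x t)
        + ⟪gradquad Q l (x t), xcand t (k t) - x t⟫
        + β / 2 * qnorm (η ^ k t • Matrix.diagonal fun i => Q i i)
            (xcand t (k t) - x t))
    (hsmallest : ∀ (t : ℕ), ∀ j < k t,
      ¬ (fquad Q l (xcand t j) ≤ fquad Q l (x t)
        + ⟪gradquad Q l (x t), xcand t j - x t⟫
        + β / 2 * qnorm (η ^ j • Matrix.diagonal fun i => Q i i) (xcand t j - x t)))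
    (hopt : ∀ y, (fquad Q l xstar : EReal) + g xstar ≤ (fquad Q l y : EReal) + g y) :
    ∀ t : ℕ, 1 ≤ t →
      ((fquad Q l (x t) : EReal) + g (x t)) - ((fquad Q l xstar : EReal) + g xstar)
        ≤ ((max 1 (η * τ / β) * L₁ *
            qnorm ((Finset.univ.sup' ⟨⟨0, hn⟩, Finset.mem_univ _⟩ fun i => Q i i)⁻¹
              • Matrix.diagonal fun i => Q i i) (x 0 - xstar) / (2 * t) : ℝ) : EReal) := by
  intro t ht
  obtain ⟨z0, hz0⟩ := hg_proper
  have hη0 : (0:ℝ) < η := by linarith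
  have hQsymm : Q.IsSymm := by
    have h := hQ.1
    rwa [Matrix.IsHermitian, Matrix.conjTranspose_eq_transpose_of_trivial] at h
  have hDsymm : (Matrix.diagonal fun i => Q i i).IsSymm := Matrix.isSymm_diagonal _
  have hqQ : ∀ z : EuclideanSpace ℝ (Fin n), 0 ≤ qnorm Q z := by
    intro z
    have h := hQ.dotProduct_mulVec_nonneg (fun i => z i)
    simpa [qnorm] using h
  have hqD0 : ∀ z : EuclideanSpace ℝ (Fin n),
      0 ≤ qnorm (Matrix.diagonal fun i => Q i i) z :=
    fun z => Stmt9Aux.qdiag_nonneg (fun i => (hQd i).le) z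
  have hgfin : ∀ s j, g (xcand s j) ≠ ⊤ := by
    intro s j htop
    have h := hprox s j z0
    rw [htop, show g z0 = ((g z0).toReal : EReal) from
        (EReal.coe_toReal hz0 (hg_nebot z0)).symm, ← EReal.coe_add,
      EReal.top_add_coe] at h
    exact absurd h (not_le.mpr (EReal.coe_lt_top _))
  have hgx : ∀ s, 1 ≤ s → g (x s) ≠ ⊤ := by
    intro s hs
    match s, hs with
    | (m+1), _ => rw [hstep m]; exact hgfin m (k m)
  have hgstar : g xstar ≠ ⊤ := by
    intro htop
    have h := hopt z0
    rw [htop, EReal.add_top_of_ne_bot (EReal.coe_ne_bot _), show g z0 = ((g z0).toReal : EReal) from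
        (EReal.coe_toReal hz0 (hg_nebot z0)).symm, ← EReal.coe_add] at h
    exact absurd h (not_le.mpr (EReal.coe_lt_top _))
  obtain ⟨Fr, hFr⟩ : ∃ F : ℕ → ℝ, F = fun s => fquad Q l (x s) + (g (x s)).toReal := ⟨_, rfl⟩
  obtain ⟨Fstar, hFstar⟩ : ∃ F : ℝ, F = fquad Q l xstar + (g xstar).toReal := ⟨_, rfl⟩
  obtain ⟨Δ, hΔ⟩ : ∃ D : ℕ → ℝ,
    D = fun s => qnorm (Matrix.diagonal fun i => Q i i) (x s - xstar) := ⟨_, rfl⟩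
  set c : ℝ := max 1 (η * τ / β) with hc
  have hopt' : ∀ y, g y ≠ ⊤ → Fstar ≤ fquad Q l y + (g y).toReal := by
    intro y hy
    have h := hopt y
    rw [show g xstar = ((g xstar).toReal : EReal) from
        (EReal.coe_toReal hgstar (hg_nebot _)).symm,
      show g y = ((g y).toReal : EReal) from (EReal.coe_toReal hy (hg_nebot _)).symm,
      ← EReal.coe_add, ← EReal.coe_add] at h
    rw [hFstar]
    exact_mod_cast h
  have hη_pow_pos : ∀ s : ℕ, (0:ℝ) < η ^ s := fun s => pow_pos hη0 s
  -- the key one-step estimate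
  have key : ∀ (s : ℕ) (y : EuclideanSpace ℝ (Fin n)), g y ≠ ⊤ →
      Fr (s+1) ≤ fquad Q l y + (g y).toReal
        + η ^ k s / 2 * (qnorm (Matrix.diagonal fun i => Q i i) (y - x s)
            - qnorm (Matrix.diagonal fun i => Q i i) (y - x (s+1))) := by
    intro s y hy
    have hpr := hprox s (k s)
    have hac := haccept s
    have hHsymm : (η ^ k s • Matrix.diagonal fun i => Q i i).IsSymm :=
      hDsymm.smul (η ^ k s)
    have hHpos : ∀ z, 0 ≤ qnorm (η ^ k s • Matrix.diagonal fun i => Q i i) z := by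
      intro z
      rw [Stmt9Aux.qnorm_smulM]
      exact mul_nonneg (hη_pow_pos (k s)).le (hqD0 z)
    have hdet : IsUnit (η ^ k s • Matrix.diagonal fun i => Q i i).det := by
      rw [Matrix.det_smul, Matrix.det_diagonal]
      exact (mul_ne_zero (pow_ne_zero _ (hη_pow_pos (k s)).ne')
        (Finset.prod_ne_zero_iff.mpr fun i _ => (hQd i).ne')).isUnit
    set H := η ^ k s • Matrix.diagonal fun i => Q i i with hHdef
    set gv := gradquad Q l (x s) with hgv
    set wv := H⁻¹.mulVec (fun i => gv i) with hwv
    have hHw : H.mulVec wv = fun i => gv i := by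
      rw [hwv, Matrix.mulVec_mulVec, Matrix.mul_nonsing_inv _ hdet, Matrix.one_mulVec]
    have hp3 := Stmt9Aux.prox3 g hg_nebot hg_convex hHsymm hHpos
      (x s - toE wv) (xcand s (k s)) hpr (hgfin s (k s)) y hy
    have hbw : ∀ z : EuclideanSpace ℝ (Fin n),
        Stmt9Aux.bform H z (toE wv) = ⟪gv, z⟫ := by
      intro z
      show dotProduct (fun i => z i) (H.mulVec fun i => toE wv i) = _
      rw [Stmt9Aux.pv_toE, hHw]
      simp [dotProduct, PiLp.inner_apply, mul_comm]
    have e1 : xcand s (k s) - (x s - toE wv) = (xcand s (k s) - x s) + toE wv := by abel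
    have e2 : y - (x s - toE wv) = (y - x s) + toE wv := by abel
    have q1e : qnorm H (xcand s (k s) - (x s - toE wv))
        = qnorm H (xcand s (k s) - x s) + 2*⟪gv, xcand s (k s) - x s⟫
          + qnorm H (toE wv) := by
      rw [e1, Stmt9Aux.qnorm_add hHsymm, hbw]
    have q2e : qnorm H (y - (x s - toE wv))
        = qnorm H (y - x s) + 2*⟪gv, y - x s⟫ + qnorm H (toE wv) := by
      rw [e2, Stmt9Aux.qnorm_add hHsymm, hbw]
    have hq0 : 0 ≤ qnorm H (xcand s (k s) - x s) := hHpos _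
    have hacc' : fquad Q l (xcand s (k s)) ≤ fquad Q l (x s)
        + ⟪gv, xcand s (k s) - x s⟫ + 1/2 * qnorm H (xcand s (k s) - x s) := by
      nlinarith [hac, mul_nonneg (by linarith : (0:ℝ) ≤ 1 - β) hq0]
    have hconvf : fquad Q l (x s) + ⟪gv, y - x s⟫ ≤ fquad Q l y := by
      have he : x s + (y - x s) = y := by abel
      have hfe := Stmt9Aux.fquad_expand hQsymm l (x s) (y - x s)
      rw [he, ← hgv] at hfe
      have := hqQ (y - x s)
      linarith
    have hFr1 : Fr (s+1) = fquad Q l (xcand s (k s)) + (g (xcand s (k s))).toReal := by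
      simp only [hFr]
      rw [hstep s]
    have hgoal2 : η ^ k s / 2 * (qnorm (Matrix.diagonal fun i => Q i i) (y - x s)
          - qnorm (Matrix.diagonal fun i => Q i i) (y - x (s+1)))
        = 1/2 * qnorm H (y - x s) - 1/2 * qnorm H (y - xcand s (k s)) := by
      rw [hstep s, hHdef, Stmt9Aux.qnorm_smulM, Stmt9Aux.qnorm_smulM]
      ring
    rw [hFr1, hgoal2]
    linarith [hp3, q1e, q2e, hacc', hconvf]
  have hFrk : ∀ s : ℕ, Fstar ≤ Fr (s+1) := by
    intro s
    have e := hopt' (x (s+1)) (hgx (s+1) (Nat.le_add_left 1 s))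
    rw [hFr]
    exact e
  have hE : ∀ s, Fr (s+1) - Fstar ≤ η ^ k s / 2 * (Δ s - Δ (s+1)) := by
    intro s
    have h := key s xstar hgstar
    have h1 : qnorm (Matrix.diagonal fun i => Q i i) (xstar - x s) = Δ s := by
      simp only [hΔ]
      rw [show xstar - x s = -(x s - xstar) by abel, Stmt9Aux.qnorm_neg]
    have h2 : qnorm (Matrix.diagonal fun i => Q i i) (xstar - x (s+1)) = Δ (s+1) := by
      simp only [hΔ]
      rw [show xstar - x (s+1) = -(x (s+1) - xstar) by abel, Stmt9Aux.qnorm_neg]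
    rw [h1, h2, ← hFstar] at h
    linarith
  have hΔmono : ∀ s, Δ (s+1) ≤ Δ s := by
    intro s
    by_contra hcon
    push_neg at hcon
    have h := hE s
    have h2 := hFrk s
    have h3 : 0 ≤ η ^ k s / 2 * (Δ s - Δ (s + 1)) := by linarith
    have h4 : η ^ k s / 2 * (Δ s - Δ (s + 1)) < 0 :=
      mul_neg_of_pos_of_neg (by linarith [hη_pow_pos (k s)]) (by linarith)
    linarith
  have hkc : ∀ s, η ^ k s ≤ c := by
    intro s
    rcases Nat.eq_zero_or_pos (k s) with h0 | hpos
    · rw [h0, pow_zero, hc]; exact le_max_left _ _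
    · obtain ⟨m, hm⟩ : ∃ m, k s = m + 1 := ⟨k s - 1, by omega⟩
      have hns := hsmallest s m (by omega)
      push_neg at hns
      by_cases hd : xcand s m - x s = 0
      · exfalso
        have hxe : xcand s m = x s := by rwa [sub_eq_zero] at hd
        rw [hxe] at hns
        simp only [sub_self, inner_zero_right, Stmt9Aux.qnorm_zero, mul_zero,
          add_zero] at hns
        exact lt_irrefl _ hns
      · have hfe := Stmt9Aux.fquad_expand hQsymm l (x s) (xcand s m - x s)
        rw [show x s + (xcand s m - x s) = xcand s m by abel] at hfe
        rw [hfe, Stmt9Aux.qnorm_smulM] at hns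
        have hqd_pos : 0 < qnorm (Matrix.diagonal fun i => Q i i) (xcand s m - x s) :=
          Stmt9Aux.qdiag_pos hQd hd
        have hmem : qnorm Q (xcand s m - x s)
            / qnorm (Matrix.diagonal fun i => Q i i) (xcand s m - x s)
            ∈ {r : ℝ | ∃ v : Fin n → ℝ, v ≠ 0 ∧
              r = dotProduct v (Q.mulVec v) /
                dotProduct v ((Matrix.diagonal fun i => Q i i).mulVec v)} :=
          ⟨fun i => (xcand s m - x s) i,
            fun hv => hd (PiLp.ext fun i => congrFun hv i), rfl⟩
        have hub := hτ.1 hmem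
        rw [div_le_iff₀ hqd_pos] at hub
        have hβη : β * η ^ m < τ := by
          have h1 : β * η ^ m * qnorm (Matrix.diagonal fun i => Q i i) (xcand s m - x s)
              < τ * qnorm (Matrix.diagonal fun i => Q i i) (xcand s m - x s) := by
            nlinarith [hns, hub]
          exact (mul_lt_mul_iff_of_pos_right hqd_pos).mp h1
        have hlt : η ^ k s < η * τ / β := by
          rw [hm, pow_succ]
          have h2 : η ^ m < τ / β := by rwa [lt_div_iff₀ hβ0, mul_comm]
          calc η ^ m * η < (τ/β) * η := mul_lt_mul_of_pos_right h2 hη0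
          _ = η * τ / β := by ring
        rw [hc]
        exact le_max_of_le_right hlt.le
  have hc1 : (1:ℝ) ≤ c := by rw [hc]; exact le_max_left _ _
  have hEc : ∀ s, Fr (s+1) - Fstar ≤ c/2 * (Δ s - Δ (s+1)) := by
    intro s
    have h := hE s
    have hm := hΔmono s
    have hk := hkc s
    have hint := mul_le_mul_of_nonneg_right hk (by linarith : (0:ℝ) ≤ Δ s - Δ (s+1))
    nlinarith
  have hmono : ∀ a b : ℕ, 1 ≤ a → a ≤ b → Fr b ≤ Fr a := by
    intro a b ha hab
    induction b, hab using Nat.le_induction with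
    | base => exact le_refl _
    | succ m hm ih =>
      have h := key m (x m) (hgx m (le_trans ha hm))
      have h1 : qnorm (Matrix.diagonal fun i => Q i i) (x m - x m) = 0 := by
        rw [sub_self, Stmt9Aux.qnorm_zero]
      have h2 : 0 ≤ qnorm (Matrix.diagonal fun i => Q i i) (x m - x (m+1)) := hqD0 _
      have hfrm : fquad Q l (x m) + (g (x m)).toReal = Fr m := by simp only [hFr]
      rw [h1, hfrm] at h
      have h4 : 0 ≤ η ^ k m / 2 * qnorm (Matrix.diagonal fun i => Q i i) (x m - x (m + 1)) :=
        mul_nonneg (by linarith [hη_pow_pos (k m)]) h2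
      have h5 : η ^ k m / 2 * (0 - qnorm (Matrix.diagonal fun i => Q i i) (x m - x (m + 1)))
          = -(η ^ k m / 2 * qnorm (Matrix.diagonal fun i => Q i i) (x m - x (m + 1))) := by
        ring
      rw [h5] at h
      linarith
  have hsum2 : (t:ℝ) * (Fr t - Fstar) ≤ c/2 * (Δ 0 - Δ t) := by
    calc (t:ℝ) * (Fr t - Fstar) = ∑ _s ∈ Finset.range t, (Fr t - Fstar) := by
          rw [Finset.sum_const, Finset.card_range, nsmul_eq_mul]
    _ ≤ ∑ s ∈ Finset.range t, (Fr (s+1) - Fstar) := by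
          apply Finset.sum_le_sum
          intro s hs
          have hmo := hmono (s+1) t (Nat.le_add_left 1 s)
            (Nat.succ_le_of_lt (Finset.mem_range.mp hs))
          linarith
    _ ≤ ∑ s ∈ Finset.range t, (c/2 * (Δ s - Δ (s+1))) :=
          Finset.sum_le_sum fun s _ => hEc s
    _ = c/2 * (Δ 0 - Δ t) := by rw [← Finset.mul_sum, Finset.sum_range_sub' Δ]
  have hΔ0 : 0 ≤ Δ 0 := by rw [hΔ]; exact hqD0 _
  have hΔt : 0 ≤ Δ t := by rw [hΔ]; exact hqD0 _
  have ht0 : (0:ℝ) < t := by exact_mod_cast Nat.lt_of_lt_of_le Nat.zero_lt_one ht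
  have hsum2' : (t:ℝ) * (Fr t - Fstar) ≤ c/2 * Δ 0 := by
    nlinarith [mul_nonneg (by linarith : (0:ℝ) ≤ c) hΔt]
  have hmain : Fr t - Fstar ≤ c * Δ 0 / (2 * t) := by
    rw [le_div_iff₀ (by positivity : (0:ℝ) < 2 * t)]
    have h8 : (Fr t - Fstar) * (2 * t) = 2 * ((t:ℝ) * (Fr t - Fstar)) := by ring
    rw [h8]
    linarith
  set maxD := Finset.univ.sup' ⟨⟨0, hn⟩, Finset.mem_univ _⟩ (fun i => Q i i) with hmaxD
  have hmaxD_mem : ∃ i : Fin n, maxD = Q i i := by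
    obtain ⟨i, _, hi⟩ := Finset.exists_mem_eq_sup'
      (⟨⟨0, hn⟩, Finset.mem_univ _⟩ : Finset.univ.Nonempty) (fun i : Fin n => Q i i)
    exact ⟨i, hi⟩
  have hmaxD_pos : 0 < maxD := by
    obtain ⟨i, hi⟩ := hmaxD_mem; rw [hi]; exact hQd i
  have habs : ∀ (w : EuclideanSpace ℝ (Fin n)) (i : Fin n), |w i| ≤ ‖w‖ := by
    intro w i
    rw [EuclideanSpace.norm_eq, ← Real.sqrt_sq_eq_abs (w i)]
    apply Real.sqrt_le_sqrt
    have he : (w i) ^ 2 = ‖w i‖ ^ 2 := by rw [Real.norm_eq_abs, sq_abs]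
    rw [he]
    exact Finset.single_le_sum (f := fun j => ‖w j‖ ^ 2)
      (fun j _ => sq_nonneg _) (Finset.mem_univ i)
  have hL1 : maxD ≤ L₁ := by
    obtain ⟨i0, hi0⟩ := hmaxD_mem
    have h := hlip (toE (Pi.single i0 1)) 0
    have hnorm1 : ‖toE (Pi.single i0 (1:ℝ)) - 0‖ = 1 := by
      rw [sub_zero, show toE (Pi.single i0 (1:ℝ)) = EuclideanSpace.single i0 1 from rfl,
        EuclideanSpace.norm_single, norm_one]
    rw [hnorm1, mul_one] at h
    have hcomp : (gradquad Q l (toE (Pi.single i0 1)) - gradquad Q l 0) i0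
        = Q i0 i0 := by
      show (Q.mulVec (fun i => toE (Pi.single i0 (1:ℝ)) i) + l) i0
          - (Q.mulVec (fun i => (0 : EuclideanSpace ℝ (Fin n)) i) + l) i0 = Q i0 i0
      rw [Stmt9Aux.pv_toE, Stmt9Aux.pv_zero, Matrix.mulVec_zero, Matrix.mulVec_single]
      simp
    have := habs (gradquad Q l (toE (Pi.single i0 1)) - gradquad Q l 0) i0
    rw [hcomp] at this
    calc maxD = Q i0 i0 := hi0
    _ ≤ |Q i0 i0| := le_abs_self _
    _ ≤ ‖gradquad Q l (toE (Pi.single i0 1)) - gradquad Q l 0‖ := this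
    _ ≤ L₁ := h
  have hqnorm' : qnorm (maxD⁻¹ • Matrix.diagonal fun i => Q i i) (x 0 - xstar)
      = maxD⁻¹ * Δ 0 := by
    rw [Stmt9Aux.qnorm_smulM]
    simp only [hΔ]
  -- convert the goal to a real inequality
  rw [show g (x t) = (((g (x t)).toReal : ℝ) : EReal) from
      (EReal.coe_toReal (hgx t ht) (hg_nebot _)).symm,
    show g xstar = (((g xstar).toReal : ℝ) : EReal) from
      (EReal.coe_toReal hgstar (hg_nebot _)).symm,
    ← EReal.coe_add, ← EReal.coe_add, ← EReal.coe_sub, EReal.coe_le_coe_iff]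
  rw [hqnorm']
  have e3 : Fr t = fquad Q l (x t) + (g (x t)).toReal := by simp only [hFr]
  have e4 : Fstar = fquad Q l xstar + (g xstar).toReal := hFstar
  have h5 : maxD * (maxD⁻¹ * Δ 0) = Δ 0 := by field_simp
  have h6 : maxD * (maxD⁻¹ * Δ 0) ≤ L₁ * (maxD⁻¹ * Δ 0) :=
    mul_le_mul_of_nonneg_right hL1 (mul_nonneg (inv_nonneg.mpr hmaxD_pos.le) hΔ0)
  have h7 : c * Δ 0 ≤ c * (L₁ * (maxD⁻¹ * Δ 0)) :=
    mul_le_mul_of_nonneg_left (by linarith) (by linarith : (0:ℝ) ≤ c)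
  have hchain : c * Δ 0 / (2 * t) ≤ c * (L₁ * (maxD⁻¹ * Δ 0)) / (2 * t) :=
    div_le_div_of_nonneg_right h7 (by positivity)
  calc fquad Q l (x t) + (g (x t)).toReal - (fquad Q l xstar + (g xstar).toReal)
      = Fr t - Fstar := by rw [e3, e4]
  _ ≤ c * Δ 0 / (2 * t) := hmain
  _ ≤ c * (L₁ * (maxD⁻¹ * Δ 0)) / (2 * t) := hchain
  _ = c * L₁ * (maxD⁻¹ * Δ 0) / (2 * t) := by ring
end

section
/- Let f(x) = (1/2)xᵀQx + lᵀx with Q positive definite, D = diag(Q), g proper closed convex, x* the unique minimizer of F = f + g. Let {x^t} be generated by the PDNM with 0 < β ≤ 1. Then ‖x^{t+1}−x*‖²_D ≤ (1 − σ/(η̄τ))‖x^t−x*‖²_D for all t ≥ 0, where σ = inf_{v≠0} vᵀQv/vᵀDv, τ = sup_{v≠0} vᵀQv/vᵀDv, and η̄ = max{1/τ, η/β}. -/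
open scoped RealInnerProductSpace

/-! ### Auxiliary lemmas -/

section aux
variable {n : ℕ}

/-- The quadratic form of a matrix on plain vectors. -/
noncomputable def dq (H : Matrix (Fin n) (Fin n) ℝ) (v : Fin n → ℝ) : ℝ :=
  dotProduct v (H.mulVec v)

lemma qnorm_eq_dq (H : Matrix (Fin n) (Fin n) ℝ) (z : EuclideanSpace ℝ (Fin n)) :
    qnorm H z = dq H (fun i => z i) := rfl

lemma inner_eq_dot (a b : EuclideanSpace ℝ (Fin n)) :
    ⟪a, b⟫ = dotProduct (fun i => a i) (fun i => b i) := by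
  simp [PiLp.inner_apply, RCLike.inner_apply, dotProduct, mul_comm]

lemma dot_symm (H : Matrix (Fin n) (Fin n) ℝ) (hH : H.transpose = H) (a b : Fin n → ℝ) :
    dotProduct a (H.mulVec b) = dotProduct b (H.mulVec a) := by
  rw [Matrix.dotProduct_mulVec, ← Matrix.mulVec_transpose, hH, dotProduct_comm]

lemma dq_add (H : Matrix (Fin n) (Fin n) ℝ) (hH : H.transpose = H) (a b : Fin n → ℝ) :
    dq H (a + b) = dq H a + 2 * dotProduct a (H.mulVec b) + dq H b := by
  unfold dq
  rw [Matrix.mulVec_add, dotProduct_add, add_dotProduct,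
    add_dotProduct, dot_symm H hH b a]
  ring

lemma dq_smul_vec (H : Matrix (Fin n) (Fin n) ℝ) (c : ℝ) (v : Fin n → ℝ) :
    dq H (c • v) = c ^ 2 * dq H v := by
  unfold dq
  rw [Matrix.mulVec_smul, dotProduct_smul, smul_dotProduct]
  simp; ring

lemma dq_smul_mat (H : Matrix (Fin n) (Fin n) ℝ) (c : ℝ) (v : Fin n → ℝ) :
    dq (c • H) v = c * dq H v := by
  unfold dq
  rw [Matrix.smul_mulVec, dotProduct_smul]; simp

lemma dq_neg (H : Matrix (Fin n) (Fin n) ℝ) (v : Fin n → ℝ) :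
    dq H (-v) = dq H v := by
  unfold dq
  rw [Matrix.mulVec_neg, dotProduct_neg, neg_dotProduct, neg_neg]

lemma dq_diag (d : Fin n → ℝ) (v : Fin n → ℝ) :
    dq (Matrix.diagonal d) v = ∑ i, d i * v i ^ 2 := by
  unfold dq
  simp [dotProduct, Matrix.mulVec_diagonal]
  exact Finset.sum_congr rfl fun i _ => by ring

/-- Exact second-order Taylor expansion of the quadratic `fquad`. -/
lemma taylor (Q : Matrix (Fin n) (Fin n) ℝ) (hQs : Q.transpose = Q) (l : Fin n → ℝ)
    (x y : EuclideanSpace ℝ (Fin n)) :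
    fquad Q l y = fquad Q l x + ⟪gradquad Q l x, y - x⟫ + (1:ℝ)/2 * qnorm Q (y - x) := by
  have hv : (fun i => y i) = (fun i => x i) + (fun i => (y - x) i) := by
    funext i; simp [PiLp.sub_apply]
  have h1 : qnorm Q y = qnorm Q x + 2 * dotProduct (fun i => x i)
      (Q.mulVec (fun i => (y - x) i)) + qnorm Q (y - x) := by
    rw [qnorm_eq_dq, qnorm_eq_dq, qnorm_eq_dq, hv, dq_add Q hQs]
  have h2 : ⟪gradquad Q l x, y - x⟫ = dotProduct (fun i => x i)
      (Q.mulVec (fun i => (y - x) i)) + dotProduct l (fun i => (y - x) i) := by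
    rw [inner_eq_dot]
    have hg : (fun i => gradquad Q l x i) = Q.mulVec (fun i => x i) + l := rfl
    rw [hg, add_dotProduct, dotProduct_comm (Q.mulVec fun i => x i),
      dot_symm Q hQs _ (fun i => x i)]
  have h3 : dotProduct l (fun i => y i)
      = dotProduct l (fun i => x i) + dotProduct l (fun i => (y - x) i) := by
    rw [hv, dotProduct_add]
  unfold fquad
  rw [h1, h2, h3]; ring

end aux
set_option maxHeartbeats 2000000 in
/-- Q-linear convergence of PDNM for strongly convex quadratic `f`:
`‖x^{t+1}−x*‖²_D ≤ (1 − σ/(η̄τ))‖x^t−x*‖²_D`, where `η̄ = max{1/τ, η/β}`. -/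
theorem stmt10 {n : ℕ} (Q : Matrix (Fin n) (Fin n) ℝ) (l : Fin n → ℝ)
    (g : EuclideanSpace ℝ (Fin n) → EReal)
    (η β σ τ : ℝ) (x : ℕ → EuclideanSpace ℝ (Fin n))
    (xcand : ℕ → ℕ → EuclideanSpace ℝ (Fin n)) (k : ℕ → ℕ)
    (xstar : EuclideanSpace ℝ (Fin n))
    (hQ : Q.PosDef)
    (hg_proper : ∃ z, g z ≠ ⊤) (hg_nebot : ∀ z, g z ≠ ⊥)
    (hg_closed : LowerSemicontinuous g)
    (hg_convex : ∀ (z w : EuclideanSpace ℝ (Fin n)) (a b : ℝ), 0 ≤ a → 0 ≤ b →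
      a + b = 1 → g (a • z + b • w) ≤ (a : EReal) * g z + (b : EReal) * g w)
    (hη : 1 < η) (hβ0 : 0 < β) (hβ1 : β ≤ 1)
    (hσ : IsGLB {r : ℝ | ∃ v : Fin n → ℝ, v ≠ 0 ∧
      r = dotProduct v (Q.mulVec v) /
        dotProduct v ((Matrix.diagonal fun i => Q i i).mulVec v)} σ)
    (hτ : IsLUB {r : ℝ | ∃ v : Fin n → ℝ, v ≠ 0 ∧
      r = dotProduct v (Q.mulVec v) /
        dotProduct v ((Matrix.diagonal fun i => Q i i).mulVec v)} τ)
    (hprox : ∀ (t j : ℕ),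
      IsProxPt g (η ^ j • Matrix.diagonal fun i => Q i i)
        (x t - toE ((η ^ j • Matrix.diagonal fun i => Q i i)⁻¹.mulVec
          fun i => gradquad Q l (x t) i)) (xcand t j))
    (hstep : ∀ t : ℕ, x (t + 1) = xcand t (k t))
    (haccept : ∀ t : ℕ,
      fquad Q l (xcand t (k t)) ≤ fquad Q l (x t)
        + ⟪gradquad Q l (x t), xcand t (k t) - x t⟫
        + β / 2 * qnorm (η ^ k t • Matrix.diagonal fun i => Q i i)
            (xcand t (k t) - x t))
    (hsmallest : ∀ (t : ℕ), ∀ j < k t,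
      ¬ (fquad Q l (xcand t j) ≤ fquad Q l (x t)
        + ⟪gradquad Q l (x t), xcand t j - x t⟫
        + β / 2 * qnorm (η ^ j • Matrix.diagonal fun i => Q i i) (xcand t j - x t)))
    (hopt : ∀ y, (fquad Q l xstar : EReal) + g xstar ≤ (fquad Q l y : EReal) + g y)
    (huniq : ∀ z : EuclideanSpace ℝ (Fin n),
      (∀ y, (fquad Q l z : EReal) + g z ≤ (fquad Q l y : EReal) + g y) → z = xstar) :
    ∀ t : ℕ, qnorm (Matrix.diagonal fun i => Q i i) (x (t + 1) - xstar)
      ≤ (1 - σ / (max (1 / τ) (η / β) * τ)) *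
        qnorm (Matrix.diagonal fun i => Q i i) (x t - xstar) := by
  classical
  have hQs : Q.transpose = Q := by simpa [Matrix.IsHermitian] using hQ.1
  set D : Matrix (Fin n) (Fin n) ℝ := Matrix.diagonal (fun i => Q i i) with hDdef
  have hQpos : ∀ v : Fin n → ℝ, v ≠ 0 → 0 < dotProduct v (Q.mulVec v) := by
    intro v hv; simpa using hQ.dotProduct_mulVec_pos hv
  have hdiag : ∀ i, 0 < Q i i := by
    intro i
    have h := hQ.dotProduct_mulVec_pos (x := Pi.single i 1) (by
      simp [Function.ne_iff])
    simpa [dotProduct_single, Matrix.mulVec_single] using h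
  have hDq : ∀ v : Fin n → ℝ, dq D v = ∑ i, Q i i * v i ^ 2 := fun v => dq_diag _ v
  have hDnn : ∀ v : Fin n → ℝ, 0 ≤ dq D v := by
    intro v; rw [hDq]
    exact Finset.sum_nonneg fun i _ => mul_nonneg (hdiag i).le (sq_nonneg _)
  have hDpos : ∀ v : Fin n → ℝ, v ≠ 0 → 0 < dq D v := by
    intro v hv; rw [hDq]
    obtain ⟨i, hi⟩ := Function.ne_iff.mp hv
    refine Finset.sum_pos' (fun j _ => mul_nonneg (hdiag j).le (sq_nonneg _)) ⟨i, Finset.mem_univ i, ?_⟩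
    have hvi : v i ≠ 0 := by simpa using hi
    exact mul_pos (hdiag i) (by positivity)
  -- dispose of the degenerate case n = 0
  rcases Nat.eq_zero_or_pos n with hn | hn
  · exfalso
    subst hn
    have h1 : τ ≤ τ - 1 := hτ.2 (by
      rintro r ⟨v, hv, -⟩
      exact absurd (Subsingleton.elim v 0) hv)
    linarith
  -- the value 1 belongs to the Rayleigh-quotient set
  have h1S : (1:ℝ) ∈ {r : ℝ | ∃ v : Fin n → ℝ, v ≠ 0 ∧
      r = dotProduct v (Q.mulVec v) / dotProduct v (D.mulVec v)} := by
    refine ⟨Pi.single ⟨0, hn⟩ 1, by simp [Function.ne_iff], ?_⟩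
    have hnum : dotProduct (Pi.single (⟨0, hn⟩ : Fin n) (1:ℝ))
        (Q.mulVec (Pi.single ⟨0, hn⟩ 1)) = Q ⟨0, hn⟩ ⟨0, hn⟩ := by
      simp [dotProduct_single, Matrix.mulVec_single]
    have hden : dotProduct (Pi.single (⟨0, hn⟩ : Fin n) (1:ℝ))
        (D.mulVec (Pi.single ⟨0, hn⟩ 1)) = Q ⟨0, hn⟩ ⟨0, hn⟩ := by
      simp [hDdef, dotProduct_single, Matrix.mulVec_single]
    rw [hnum, hden, div_self (hdiag _).ne']
  have hτ1 : (1:ℝ) ≤ τ := hτ.1 h1S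
  have hτpos : (0:ℝ) < τ := by linarith
  have hσ0 : (0:ℝ) ≤ σ := hσ.2 (by
    rintro r ⟨v, hv, rfl⟩
    exact (div_pos (hQpos v hv) (hDpos v hv)).le)
  have hbound : ∀ z : EuclideanSpace ℝ (Fin n),
      σ * qnorm D z ≤ qnorm Q z ∧ qnorm Q z ≤ τ * qnorm D z := by
    intro z
    by_cases hz : (fun i => z i) = (0 : Fin n → ℝ)
    · have hz1 : qnorm D z = 0 := by rw [qnorm_eq_dq, hz]; simp [dq]
      have hz2 : qnorm Q z = 0 := by rw [qnorm_eq_dq, hz]; simp [dq]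
      rw [hz1, hz2]; simp
    · have hd : (0:ℝ) < dq D (fun i => z i) := hDpos _ hz
      have h1 : σ ≤ qnorm Q z / qnorm D z := hσ.1 ⟨fun i => z i, hz, rfl⟩
      have h2 : qnorm Q z / qnorm D z ≤ τ := hτ.1 ⟨fun i => z i, hz, rfl⟩
      have hd' : (0:ℝ) < qnorm D z := hd
      exact ⟨(le_div_iff₀ hd').mp h1, (div_le_iff₀ hd').mp h2⟩
  set ηbar : ℝ := max (1/τ) (η/β) with hηbar
  have hη0 : (0:ℝ) < η := by linarith
  have hηpow : ∀ t : ℕ, η ^ (k t) ≤ ηbar * τ := by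
    intro t
    cases hk : k t with
    | zero =>
      rw [pow_zero]
      calc (1:ℝ) = (1/τ) * τ := by field_simp
      _ ≤ ηbar * τ := mul_le_mul_of_nonneg_right (le_max_left _ _) hτpos.le
    | succ j =>
      have hfail := hsmallest t j (by omega)
      rw [taylor Q hQs l (x t) (xcand t j)] at hfail
      push_neg at hfail
      have hsm : qnorm ((η ^ j) • D) (xcand t j - x t) = η ^ j * qnorm D (xcand t j - x t) := by
        rw [qnorm_eq_dq, qnorm_eq_dq, dq_smul_mat]
      rw [hsm] at hfail
      by_cases hz : (fun i => (xcand t j - x t) i) = (0 : Fin n → ℝ)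
      · exfalso
        have hz1 : qnorm D (xcand t j - x t) = 0 := by rw [qnorm_eq_dq, hz]; simp [dq]
        have hz2 : qnorm Q (xcand t j - x t) = 0 := by rw [qnorm_eq_dq, hz]; simp [dq]
        rw [hz1, hz2] at hfail; linarith
      · have hd : (0:ℝ) < qnorm D (xcand t j - x t) := hDpos _ hz
        have hub := (hbound (xcand t j - x t)).2
        have hβη : β * η ^ j < τ := by
          have h1 : β / 2 * (η ^ j * qnorm D (xcand t j - x t))
              < (1:ℝ)/2 * qnorm Q (xcand t j - x t) := by linarith
          nlinarith
        have h5 : η ^ (j+1) = η * η ^ j := by ring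
        have h6 : η ^ j < τ / β := by rw [lt_div_iff₀ hβ0]; linarith [mul_comm β (η ^ j)]
        have h7 : η * η ^ j ≤ η * (τ / β) :=
          mul_le_mul_of_nonneg_left h6.le hη0.le
        have h8 : η * (τ / β) = (η / β) * τ := by ring
        have h9 : (η / β) * τ ≤ ηbar * τ :=
          mul_le_mul_of_nonneg_right (le_max_right _ _) hτpos.le
        linarith
  -- main per-step argument
  intro t
  rw [hstep t]
  have hpx := hprox t (k t)
  have hacc := haccept t
  set H : Matrix (Fin n) (Fin n) ℝ := (η ^ (k t)) • D with hHdef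
  set w : Fin n → ℝ := fun i => gradquad Q l (x t) i with hw
  set xp : EuclideanSpace ℝ (Fin n) := xcand t (k t) with hxp
  have hηj : (0:ℝ) < η ^ k t := pow_pos hη0 _
  have hHsym : H.transpose = H := by
    rw [hHdef, Matrix.transpose_smul, hDdef, Matrix.diagonal_transpose]
  have hdet : IsUnit H.det := by
    rw [hHdef, Matrix.det_smul, hDdef, Matrix.det_diagonal]
    refine isUnit_iff_ne_zero.mpr (mul_ne_zero (pow_ne_zero _ hηj.ne') ?_)
    exact Finset.prod_ne_zero_iff.mpr fun i _ => (hdiag i).ne'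
  have hHinv : H * H⁻¹ = 1 := Matrix.mul_nonsing_inv H hdet
  have hdqH : ∀ v : Fin n → ℝ, dq H v = η ^ k t * dq D v := by
    intro v; rw [hHdef, dq_smul_mat]
  have key : ∀ z : EuclideanSpace ℝ (Fin n),
      (1:ℝ)/2 * qnorm H (z - (x t - toE (H⁻¹.mulVec w)))
      = (⟪gradquad Q l (x t), z - x t⟫ + (1:ℝ)/2 * qnorm H (z - x t))
        + (1:ℝ)/2 * dq H (H⁻¹.mulVec w) := by
    intro z
    have hvec : (fun i => (z - (x t - toE (H⁻¹.mulVec w))) i)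
        = (fun i => (z - x t) i) + H⁻¹.mulVec w := by
      funext i
      simp only [PiLp.sub_apply, Pi.add_apply]
      show z i - (x t i - (H⁻¹.mulVec w) i) = (z i - x t i) + (H⁻¹.mulVec w) i
      ring
    rw [qnorm_eq_dq, hvec, dq_add H hHsym]
    have hcross : dotProduct (fun i => (z - x t) i) (H.mulVec (H⁻¹.mulVec w))
        = dotProduct (fun i => (z - x t) i) w := by
      rw [Matrix.mulVec_mulVec, hHinv, Matrix.one_mulVec]
    rw [hcross]
    have hip : ⟪gradquad Q l (x t), z - x t⟫
        = dotProduct (fun i => (z - x t) i) w := by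
      rw [inner_eq_dot]; exact dotProduct_comm _ _
    rw [hip, qnorm_eq_dq]
    ring
  have hprox' : ∀ y, g xp + ((⟪gradquad Q l (x t), xp - x t⟫
        + (1:ℝ)/2 * qnorm H (xp - x t) : ℝ) : EReal)
      ≤ g y + ((⟪gradquad Q l (x t), y - x t⟫
        + (1:ℝ)/2 * qnorm H (y - x t) : ℝ) : EReal) := by
    intro y
    have h0 := hpx y
    rw [key xp, key y, EReal.coe_add _ ((1:ℝ)/2 * dq H (H⁻¹.mulVec w)), EReal.coe_add _ ((1:ℝ)/2 * dq H (H⁻¹.mulVec w)), ← add_assoc, ← add_assoc] at h0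
    exact (EReal.addLECancellable_coe _).add_le_add_iff_right.mp h0
  -- finiteness of the relevant values of g
  obtain ⟨z0, hz0⟩ := hg_proper
  have hgsne : g xstar ≠ ⊤ := by
    intro htop
    have h1 := hopt z0
    rw [htop] at h1
    have h2 : (fquad Q l z0 : EReal) + g z0 = ⊤ := top_le_iff.mp (by simpa using h1)
    lift g z0 to ℝ using ⟨hz0, hg_nebot z0⟩ with G0
    rw [← EReal.coe_add] at h2
    exact EReal.coe_ne_top _ h2
  obtain ⟨Gs, hGs⟩ : ∃ r : ℝ, g xstar = (r : EReal) := by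
    lift g xstar to ℝ using ⟨hgsne, hg_nebot _⟩ with Gs
    exact ⟨Gs, rfl⟩
  have hgpne : g xp ≠ ⊤ := by
    intro htop
    have h1 := hprox' xstar
    rw [htop, hGs, ← EReal.coe_add, EReal.top_add_coe] at h1
    exact EReal.coe_ne_top _ (top_le_iff.mp h1)
  obtain ⟨Gp, hGp⟩ : ∃ r : ℝ, g xp = (r : EReal) := by
    lift g xp to ℝ using ⟨hgpne, hg_nebot _⟩ with Gp
    exact ⟨Gp, rfl⟩
  -- vector abbreviations
  set av : Fin n → ℝ := fun i => (xp - x t) i with hav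
  set bv : Fin n → ℝ := fun i => (xstar - xp) i with hbv
  have hipa : ⟪gradquad Q l (x t), xp - x t⟫ = dotProduct av w := by
    rw [inner_eq_dot]; exact dotProduct_comm _ _
  have hqa : qnorm H (xp - x t) = dq H av := rfl
  have hqsum : (fun i => (xstar - x t) i) = av + bv := by
    funext i
    simp only [PiLp.sub_apply, Pi.add_apply, hav, hbv]
    ring
  have hqst : qnorm H (xstar - x t) = dq H (av + bv) := by
    rw [qnorm_eq_dq, hqsum]
  have hipst : ⟪gradquad Q l (x t), xstar - x t⟫
      = dotProduct av w + dotProduct bv w := by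
    rw [inner_eq_dot, dotProduct_comm, hqsum]
    exact add_dotProduct av bv w
  have hcb : (0:ℝ) ≤ dq H bv := by
    rw [hdqH]; exact mul_nonneg hηj.le (hDnn bv)
  have hdqa_nn : (0:ℝ) ≤ dq H av := by
    rw [hdqH]; exact mul_nonneg hηj.le (hDnn av)
  -- the three-point inequality via convexity of g
  have hlam : ∀ lam : ℝ, 0 < lam → lam ≤ 1 →
      Gp - Gs ≤ (dotProduct bv w + dotProduct av (H.mulVec bv))
        + lam/2 * dq H bv := by
    intro lam hl0 hl1
    have hconv := hg_convex xp xstar (1-lam) lam (by linarith) hl0.le (by ring)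
    have hy : (fun i => ((1-lam) • xp + lam • xstar - x t) i) = av + lam • bv := by
      funext i
      simp only [PiLp.sub_apply, PiLp.add_apply, PiLp.smul_apply, Pi.add_apply,
        Pi.smul_apply, smul_eq_mul, hav, hbv]
      ring
    have hqy : qnorm H ((1-lam) • xp + lam • xstar - x t)
        = dq H av + 2 * (lam * dotProduct av (H.mulVec bv)) + lam^2 * dq H bv := by
      rw [qnorm_eq_dq, hy, dq_add H hHsym, Matrix.mulVec_smul, dotProduct_smul,
        dq_smul_vec]
      simp [smul_eq_mul]
    have hipy : ⟪gradquad Q l (x t), (1-lam) • xp + lam • xstar - x t⟫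
        = dotProduct av w + lam * dotProduct bv w := by
      rw [inner_eq_dot, dotProduct_comm, hy, add_dotProduct,
        smul_dotProduct]
      simp [smul_eq_mul]
      rfl
    have hp := hprox' ((1-lam) • xp + lam • xstar)
    rw [hGp, hipa, hqa, hipy, hqy] at hp
    have hconv' : g ((1-lam) • xp + lam • xstar)
        ≤ (((1-lam) * Gp + lam * Gs : ℝ) : EReal) := by
      rw [hGp, hGs] at hconv
      rw [EReal.coe_add, EReal.coe_mul, EReal.coe_mul]
      exact hconv
    have hp2 := le_trans hp (add_le_add_left hconv' _)
    rw [← EReal.coe_add, ← EReal.coe_add] at hp2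
    have hreal := EReal.coe_le_coe_iff.mp hp2
    nlinarith [hreal, hl0]
  have h3 : Gp - Gs ≤ dotProduct bv w + dotProduct av (H.mulVec bv) := by
    by_contra hc
    push_neg at hc
    have hE : (0:ℝ) < Gp - Gs - (dotProduct bv w + dotProduct av (H.mulVec bv)) := by
      linarith
    set E := Gp - Gs - (dotProduct bv w + dotProduct av (H.mulVec bv)) with hEdef
    have hden : (0:ℝ) < dq H bv + 1 := by linarith
    set lam0 := min 1 (E / (dq H bv + 1)) with hlam0
    have hl0 : 0 < lam0 := lt_min one_pos (div_pos hE hden)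
    have hl1 : lam0 ≤ 1 := min_le_left _ _
    have h := hlam lam0 hl0 hl1
    have h2 : lam0 ≤ E / (dq H bv + 1) := min_le_right _ _
    have h3' : lam0 * (dq H bv + 1) ≤ E := by
      rw [← le_div_iff₀ hden]; exact h2
    nlinarith [h, h3', hl0, hcb]
  -- acceptance, Taylor at the optimum, optimality
  rw [hipa, hqa] at hacc
  have hacc2 : fquad Q l xp ≤ fquad Q l (x t) + dotProduct av w + 1/2 * dq H av := by
    nlinarith [hacc, hdqa_nn, hβ1]
  have htay := taylor Q hQs l (x t) xstar
  have hqQst : qnorm Q (xstar - x t) = dq Q (av + bv) := by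
    rw [qnorm_eq_dq, hqsum]
  rw [hipst, hqQst] at htay
  have hoptr : fquad Q l xstar + Gs ≤ fquad Q l xp + Gp := by
    have h1 := hopt xp
    rw [hGs, hGp, ← EReal.coe_add, ← EReal.coe_add] at h1
    exact EReal.coe_le_coe_iff.mp h1
  have hdqsum : dq H (av + bv)
      = dq H av + 2 * dotProduct av (H.mulVec bv) + dq H bv := dq_add H hHsym av bv
  have hkey3 : dq Q (av + bv) ≤ dq H av + 2 * dotProduct av (H.mulVec bv) := by
    linarith
  have hσb : σ * dq D (av + bv) ≤ dq Q (av + bv) := by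
    have h1 := (hbound (xstar - x t)).1
    rw [qnorm_eq_dq, qnorm_eq_dq, hqsum] at h1
    exact h1
  have hgoal1 : qnorm D (xp - xstar) = dq D bv := by
    rw [qnorm_eq_dq]
    have hneg : (fun i => (xp - xstar) i) = -bv := by
      funext i
      simp only [PiLp.sub_apply, Pi.neg_apply, hbv]
      ring
    rw [hneg, dq_neg]
  have hgoal2 : qnorm D (x t - xstar) = dq D (av + bv) := by
    rw [qnorm_eq_dq]
    have hneg : (fun i => (x t - xstar) i) = -(av + bv) := by
      funext i
      simp only [PiLp.sub_apply, Pi.neg_apply, Pi.add_apply, hav, hbv]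
      ring
    rw [hneg, dq_neg]
  have hmain : (η ^ k t) * dq D bv ≤ (η ^ k t - σ) * dq D (av + bv) := by
    have e1 := hdqH bv
    have e2 := hdqH (av + bv)
    nlinarith [hkey3, hdqsum, hσb, e1, e2]
  rw [hgoal1, hgoal2]
  have hdqDs : (0:ℝ) ≤ dq D (av + bv) := hDnn _
  have hs1 : dq D bv ≤ (1 - σ / η ^ k t) * dq D (av + bv) := by
    rw [show (1 - σ / η ^ k t) * dq D (av + bv)
        = ((η ^ k t - σ) * dq D (av + bv)) / η ^ k t from by field_simp]
    rw [le_div_iff₀ hηj]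
    nlinarith [hmain]
  have hs2 : (1 - σ / η ^ k t) ≤ 1 - σ / (ηbar * τ) := by
    have := div_le_div_of_nonneg_left hσ0 hηj (hηpow t)
    linarith
  calc dq D bv ≤ (1 - σ / η ^ k t) * dq D (av + bv) := hs1
    _ ≤ (1 - σ / (ηbar * τ)) * dq D (av + bv) :=
        mul_le_mul_of_nonneg_right hs2 hdqDs
end

section
/- Let λ > 0, a > 0, d > 0, and consider the one-dimensional scaled proximal problem min_{y∈ℝ} { λ·min{a|y|, 1} + (d/2)(y − x)² }. Then the minimum value equals min{ P₁(x), λ } where P₁(x) = (d/2)x² if |x| ≤ λa/d and P₁(x) = λa|x| − (λa)²/(2d) if |x| > λa/d; moreover P₁(x) is attained at the soft-threshold S_{λa/d}(x) = sign(x)(|x| − λa/d)₊, and the second term λ is attained at y = x. -/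
/-- the one-dimensional scaled prox problem of the capped ℓ₁ penalty,
`min_y { λ·min{a|y|,1} + (d/2)(y−x)² }`, has minimum value `min{P₁(x), λ}`, where
`P₁(x) = (d/2)x²` if `|x| ≤ λa/d` and `P₁(x) = λa|x| − (λa)²/(2d)` otherwise;
`P₁(x)` is the minimum of `y ↦ λa|y| + (d/2)(y−x)²`, attained at the soft threshold
`S_{λa/d}(x)`, and the value `λ` is attained (for the second branch) at `y = x`. -/
theorem stmt15 (lam a d x : ℝ) (hlam : 0 < lam) (ha : 0 < a) (hd : 0 < d) :
    (IsLeast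
      (Set.range fun y : ℝ => lam * min (a * |y|) 1 + d / 2 * (y - x) ^ 2)
      (min (if |x| ≤ lam * a / d then d / 2 * x ^ 2
            else lam * a * |x| - (lam * a) ^ 2 / (2 * d)) lam)) ∧
    (IsLeast
      (Set.range fun y : ℝ => lam * a * |y| + d / 2 * (y - x) ^ 2)
      (if |x| ≤ lam * a / d then d / 2 * x ^ 2
       else lam * a * |x| - (lam * a) ^ 2 / (2 * d))) ∧
    (lam * a * |Real.sign x * max (|x| - lam * a / d) 0|
        + d / 2 * (Real.sign x * max (|x| - lam * a / d) 0 - x) ^ 2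
      = if |x| ≤ lam * a / d then d / 2 * x ^ 2
        else lam * a * |x| - (lam * a) ^ 2 / (2 * d)) ∧
    (lam * 1 + d / 2 * (x - x) ^ 2 = lam) := by
  set c : ℝ := lam * a / d with hc
  have hc0 : 0 < c := by positivity
  have hla : lam * a = d * c := by rw [hc]; field_simp
  set P : ℝ := if |x| ≤ lam * a / d then d / 2 * x ^ 2
       else lam * a * |x| - (lam * a) ^ 2 / (2 * d) with hP
  -- third claim
  have h3 : lam * a * |Real.sign x * max (|x| - lam * a / d) 0|
        + d / 2 * (Real.sign x * max (|x| - lam * a / d) 0 - x) ^ 2 = P := by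
    rcases le_or_gt |x| c with h | h
    · have hmax : max (|x| - c) 0 = 0 := max_eq_right (by linarith)
      rw [hP, if_pos h]
      simp [← hc, hmax]
    · have hx0 : x ≠ 0 := by
        intro h0; rw [h0] at h; simp at h; linarith
      have hs : Real.sign x * |x| = x := by
        rcases lt_or_gt_of_ne hx0 with h' | h'
        · rw [Real.sign_of_neg h', abs_of_neg h']; ring
        · rw [Real.sign_of_pos h', abs_of_pos h']; ring
      have hsabs : |Real.sign x| = 1 := by
        rcases lt_or_gt_of_ne hx0 with h' | h'
        · rw [Real.sign_of_neg h']; norm_num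
        · rw [Real.sign_of_pos h']; norm_num
      have hmax : max (|x| - c) 0 = |x| - c := max_eq_left (by linarith)
      have hs2 : Real.sign x ^ 2 = 1 := by
        have := abs_mul_abs_self (Real.sign x)
        rw [hsabs] at this; nlinarith [this]
      rw [hP, if_neg (not_le.mpr h), hmax, abs_mul, hsabs, abs_of_nonneg (by linarith : (0:ℝ) ≤ |x| - c)]
      have : (Real.sign x * (|x| - c) - x) ^ 2 = c ^ 2 := by
        have h1 : Real.sign x * (|x| - c) - x = -(Real.sign x * c) := by
          rw [mul_sub, hs]; ring
        rw [h1]; rw [neg_pow, mul_pow]; rw [hs2]; ring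
      rw [this, hla]
      field_simp
      ring
  -- lower bound for g
  have hlb : ∀ y : ℝ, P ≤ lam * a * |y| + d / 2 * (y - x) ^ 2 := by
    intro y
    rcases le_or_gt |x| c with h | h
    · rw [hP, if_pos h]
      have h1 : x * y ≤ |x| * |y| := by
        calc x * y ≤ |x * y| := le_abs_self _
        _ = |x| * |y| := abs_mul x y
      have h2 : |x| * |y| ≤ c * |y| := by
        apply mul_le_mul_of_nonneg_right h (abs_nonneg y)
      nlinarith [sq_abs y, sq_nonneg y, abs_nonneg y, hd.le]
    · rw [hP, if_neg (not_le.mpr h)]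
      have h1 : |x| - |y| ≤ |y - x| := by
        rw [abs_sub_comm]; exact abs_sub_abs_le_abs_sub x y
      have h2 : (0:ℝ) ≤ (|y - x| - c) ^ 2 := sq_nonneg _
      have h3' : |y - x| ^ 2 = (y - x) ^ 2 := sq_abs _
      have hla2 : (lam * a) ^ 2 / (2 * d) = d * c ^ 2 / 2 := by
        rw [hla]; field_simp
      rw [hla2, hla]
      nlinarith [abs_nonneg (y - x), abs_nonneg y, mul_le_mul_of_nonneg_left h1 hd.le]
  -- membership for g at the soft threshold
  have hmem : P ∈ Set.range fun y : ℝ => lam * a * |y| + d / 2 * (y - x) ^ 2 :=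
    ⟨Real.sign x * max (|x| - lam * a / d) 0, h3⟩
  refine ⟨?_, ⟨hmem, fun v hv => by obtain ⟨y, rfl⟩ := hv; exact hlb y⟩, h3, by ring⟩
  -- first claim
  constructor
  · -- membership
    have hPle : P ≤ lam * a * |x| := by
      have := hlb x; simpa using this
    rcases le_or_gt P lam with hPl | hPl
    · refine ⟨Real.sign x * max (|x| - lam * a / d) 0, ?_⟩
      set y₀ := Real.sign x * max (|x| - lam * a / d) 0
      have hy0 : lam * a * |y₀| ≤ P := by
        nlinarith [sq_nonneg (y₀ - x), h3, hd.le]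
      have hay : a * |y₀| ≤ 1 := by
        have : lam * (a * |y₀|) ≤ lam * 1 := by nlinarith
        exact le_of_mul_le_mul_left this hlam
      beta_reduce
      rw [min_eq_left hay, show lam * (a * |y₀|) = lam * a * |y₀| by ring, h3,
        min_eq_left hPl]
    · refine ⟨x, ?_⟩
      have hax : 1 ≤ a * |x| := by
        by_contra hax
        push_neg at hax
        have : lam * a * |x| < lam := by nlinarith
        linarith
      beta_reduce
      rw [min_eq_right hax, min_eq_right hPl.le]
      ring
  · rintro v ⟨y, rfl⟩
    rcases le_total (a * |y|) 1 with hy | hy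
    · beta_reduce
      rw [min_eq_left hy]
      have := hlb y
      calc min P lam ≤ P := min_le_left _ _
        _ ≤ lam * a * |y| + d / 2 * (y - x) ^ 2 := this
        _ = lam * (a * |y|) + d / 2 * (y - x) ^ 2 := by ring
    · beta_reduce
      rw [min_eq_right hy]
      have : min P lam ≤ lam := min_le_right _ _
      nlinarith [sq_nonneg (y - x)]
end

section
/- Let λ > 0, x ∈ ℝⁿ, D = diag(d₁,…,dₙ) with dᵢ > 0, K ∈ {0,…,n}, and g₂(y) = min over Λ ⊂ [n] with |Λ| = n−K of Σ_{i∈Λ}|yᵢ| (the trimmed ℓ₁ norm). Then min_y { λg₂(y) + (1/2)‖y−x‖²_D } = min over Λ ⊂ [n], |Λ| = n−K of Σ_{i∈Λ} φ(xᵢ, dᵢ), where φ(xᵢ, dᵢ) = (dᵢ/2)xᵢ² if |xᵢ| ≤ λ/dᵢ and φ(xᵢ, dᵢ) = λ|xᵢ| − λ²/(2dᵢ) if |xᵢ| > λ/dᵢ. -/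
open scoped BigOperators

noncomputable def soft (lam dv xv : ℝ) : ℝ :=
  if |xv| ≤ lam / dv then 0 else if 0 < xv then xv - lam / dv else xv + lam / dv

lemma phi_le (lam xv dv yv : ℝ) (hlam : 0 < lam) (hd : 0 < dv) :
    (if |xv| ≤ lam / dv then dv / 2 * xv ^ 2 else lam * |xv| - lam ^ 2 / (2 * dv))
      ≤ lam * |yv| + dv / 2 * (yv - xv) ^ 2 := by
  split_ifs with h
  · have h1 : |xv| * dv ≤ lam := (le_div_iff₀ hd).mp h
    nlinarith [mul_le_mul_of_nonneg_right h1 (abs_nonneg yv),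
      le_abs_self (xv * yv), abs_mul xv yv, sq_nonneg yv, abs_nonneg yv, hd.le]
  · have hc : lam ^ 2 / (2 * dv) * (2 * dv) = lam ^ 2 :=
      div_mul_cancel₀ _ (by positivity)
    have h3 : |xv| - |yv| ≤ |yv - xv| := by
      calc |xv| - |yv| ≤ |xv - yv| := abs_sub_abs_le_abs_sub xv yv
        _ = |yv - xv| := abs_sub_comm xv yv
    have key : 2 * dv * (lam * |xv|) - lam ^ 2
        ≤ 2 * dv * (lam * |yv| + dv / 2 * (yv - xv) ^ 2) := by
      have e2 : (dv * |yv - xv|) ^ 2 = (dv * (yv - xv)) ^ 2 := by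
        rw [mul_pow, mul_pow, sq_abs]
      nlinarith [sq_nonneg (dv * |yv - xv| - lam), e2,
        mul_le_mul_of_nonneg_left h3 (by positivity : (0:ℝ) ≤ 2 * dv * lam), hd, hlam]
    nlinarith [key, hc, hd]

lemma phi_eq (lam xv dv : ℝ) (hlam : 0 < lam) (hd : 0 < dv) :
    lam * |soft lam dv xv| + dv / 2 * (soft lam dv xv - xv) ^ 2
      = (if |xv| ≤ lam / dv then dv / 2 * xv ^ 2 else lam * |xv| - lam ^ 2 / (2 * dv)) := by
  have hld : 0 < lam / dv := div_pos hlam hd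
  have hdv : dv ≠ 0 := hd.ne'
  unfold soft
  split_ifs with h h2
  · simp
  · push_neg at h
    have hx : lam / dv < xv := by rwa [abs_of_pos h2] at h
    have hs : 0 < xv - lam / dv := by linarith
    rw [abs_of_pos hs, abs_of_pos h2]
    field_simp
    ring
  · push_neg at h h2
    have hx : lam / dv < -xv := by rwa [abs_of_nonpos h2] at h
    have hs : xv + lam / dv < 0 := by linarith
    rw [abs_of_neg hs, abs_of_nonpos h2]
    field_simp
    ring

lemma finset_sInf_spec {n : ℕ} (m : ℕ) (hm : m ≤ n) (f : Finset (Fin n) → ℝ) :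
    (sInf {s : ℝ | ∃ Λ : Finset (Fin n), Λ.card = m ∧ s = f Λ}
        ∈ {s : ℝ | ∃ Λ : Finset (Fin n), Λ.card = m ∧ s = f Λ}) ∧
    ∀ Λ : Finset (Fin n), Λ.card = m →
      sInf {s : ℝ | ∃ Λ : Finset (Fin n), Λ.card = m ∧ s = f Λ} ≤ f Λ := by
  have hset : {s : ℝ | ∃ Λ : Finset (Fin n), Λ.card = m ∧ s = f Λ}
      = f '' {Λ : Finset (Fin n) | Λ.card = m} := by
    ext s
    constructor
    · rintro ⟨Λ, h1, rfl⟩; exact ⟨Λ, h1, rfl⟩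
    · rintro ⟨Λ, h1, rfl⟩; exact ⟨Λ, h1, rfl⟩
  have hfin : {s : ℝ | ∃ Λ : Finset (Fin n), Λ.card = m ∧ s = f Λ}.Finite := by
    rw [hset]; exact (Set.toFinite _).image f
  obtain ⟨Λ₀, -, hΛ₀⟩ := Finset.exists_subset_card_eq
    (show m ≤ (Finset.univ : Finset (Fin n)).card by simpa using hm)
  have hne : {s : ℝ | ∃ Λ : Finset (Fin n), Λ.card = m ∧ s = f Λ}.Nonempty :=
    ⟨f Λ₀, Λ₀, hΛ₀, rfl⟩
  exact ⟨hne.csInf_mem hfin, fun Λ hΛ => csInf_le hfin.bddBelow ⟨Λ, hΛ, rfl⟩⟩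

/-- the scaled proximal value of the trimmed ℓ₁ norm
`g₂(y) = min_{|Λ| = n−K} Σ_{i∈Λ}|yᵢ|` with positive diagonal metric `D`:
`min_y { λg₂(y) + (1/2)‖y−x‖²_D } = min_{|Λ| = n−K} Σ_{i∈Λ} φ(xᵢ, dᵢ)`, where
`φ(xᵢ,dᵢ)` is the one-dimensional prox value of the absolute value. -/
theorem stmt17 {n : ℕ} (lam : ℝ) (x d : Fin n → ℝ) (K : ℕ)
    (hlam : 0 < lam) (hd : ∀ i, 0 < d i) (hK : K ≤ n) :
    IsLeast
      {v : ℝ | ∃ y : Fin n → ℝ,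
        v = lam * sInf {s : ℝ | ∃ Λ : Finset (Fin n), Λ.card = n - K ∧
              s = ∑ i ∈ Λ, |y i|}
          + (1:ℝ)/2 * ∑ i, d i * (y i - x i) ^ 2}
      (sInf {s : ℝ | ∃ Λ : Finset (Fin n), Λ.card = n - K ∧
        s = ∑ i ∈ Λ, (if |x i| ≤ lam / d i then d i / 2 * x i ^ 2
              else lam * |x i| - lam ^ 2 / (2 * d i))}) := by
  set φ : Fin n → ℝ := fun i => if |x i| ≤ lam / d i then d i / 2 * x i ^ 2
      else lam * |x i| - lam ^ 2 / (2 * d i) with hφ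
  have hm : n - K ≤ n := Nat.sub_le n K
  obtain ⟨hUmem, hUlb⟩ := finset_sInf_spec (n - K) hm (fun Λ => ∑ i ∈ Λ, φ i)
  set M : ℝ := sInf {s : ℝ | ∃ Λ : Finset (Fin n), Λ.card = n - K ∧ s = ∑ i ∈ Λ, φ i}
    with hM
  -- lower bound part
  have hlower : ∀ y : Fin n → ℝ,
      M ≤ lam * sInf {s : ℝ | ∃ Λ : Finset (Fin n), Λ.card = n - K ∧
              s = ∑ i ∈ Λ, |y i|}
          + (1:ℝ)/2 * ∑ i, d i * (y i - x i) ^ 2 := by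
    intro y
    obtain ⟨hTmem, hTlb⟩ := finset_sInf_spec (n - K) hm (fun Λ => ∑ i ∈ Λ, |y i|)
    obtain ⟨Λ', hΛ'c, hΛ'v⟩ := hTmem
    have h1 : M ≤ ∑ i ∈ Λ', φ i := hUlb Λ' hΛ'c
    have h2 : ∑ i ∈ Λ', φ i ≤ ∑ i ∈ Λ', (lam * |y i| + d i / 2 * (y i - x i) ^ 2) := by
      refine Finset.sum_le_sum fun i _ => ?_
      exact phi_le lam (x i) (d i) (y i) hlam (hd i)
    have h3 : ∑ i ∈ Λ', d i / 2 * (y i - x i) ^ 2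
        ≤ ∑ i : Fin n, d i / 2 * (y i - x i) ^ 2 := by
      refine Finset.sum_le_sum_of_subset_of_nonneg (Finset.subset_univ Λ') fun i _ _ => ?_
      exact mul_nonneg (div_nonneg (hd i).le (by norm_num)) (sq_nonneg _)
    have h4 : ∑ i : Fin n, d i / 2 * (y i - x i) ^ 2
        = (1:ℝ)/2 * ∑ i, d i * (y i - x i) ^ 2 := by
      rw [Finset.mul_sum]; refine Finset.sum_congr rfl fun i _ => by ring
    rw [hΛ'v]
    rw [Finset.sum_add_distrib, ← Finset.mul_sum] at h2
    linarith
  constructor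
  · -- membership: build the minimizing y
    obtain ⟨Λs, hΛsc, hΛsv⟩ := hUmem
    set y : Fin n → ℝ := fun i => if i ∈ Λs then soft lam (d i) (x i) else x i with hy
    refine ⟨y, le_antisymm (hlower y) ?_⟩
    obtain ⟨hTmem, hTlb⟩ := finset_sInf_spec (n - K) hm (fun Λ => ∑ i ∈ Λ, |y i|)
    have hquad : ∑ i : Fin n, d i * (y i - x i) ^ 2
        = ∑ i ∈ Λs, d i * (y i - x i) ^ 2 := by
      refine (Finset.sum_subset (Finset.subset_univ Λs) fun i _ hi => ?_).symm
      simp [hy, hi]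
    have hterm : ∀ i ∈ Λs, lam * |y i| + d i / 2 * (y i - x i) ^ 2 = φ i := by
      intro i hi
      simp only [hy, if_pos hi]
      exact phi_eq lam (x i) (d i) hlam (hd i)
    have hsum : ∑ i ∈ Λs, (lam * |y i| + d i / 2 * (y i - x i) ^ 2) = ∑ i ∈ Λs, φ i :=
      Finset.sum_congr rfl hterm
    have hTle : sInf {s : ℝ | ∃ Λ : Finset (Fin n), Λ.card = n - K ∧
        s = ∑ i ∈ Λ, |y i|} ≤ ∑ i ∈ Λs, |y i| := hTlb Λs hΛsc
    rw [Finset.sum_add_distrib, ← Finset.mul_sum] at hsum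
    have h5 : (1:ℝ)/2 * ∑ i : Fin n, d i * (y i - x i) ^ 2
        = ∑ i ∈ Λs, d i / 2 * (y i - x i) ^ 2 := by
      rw [hquad, Finset.mul_sum]; refine Finset.sum_congr rfl fun i _ => by ring
    have hML : M = ∑ i ∈ Λs, φ i := hΛsv
    have : lam * sInf {s : ℝ | ∃ Λ : Finset (Fin n), Λ.card = n - K ∧
        s = ∑ i ∈ Λ, |y i|} ≤ lam * ∑ i ∈ Λs, |y i| :=
      mul_le_mul_of_nonneg_left hTle hlam.le
    rw [hML]
    linarith
  · rintro v ⟨y, rfl⟩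
    exact hlower y
end

section
/- Let g : ℝⁿ → (-∞,∞] be proper closed and directionally differentiable, f differentiable, H positive definite, and suppose x* ∈ prox_g^{H}(x̄ − H⁻¹∇f(x̄)) where x̄ and x* satisfy ‖∇f(x*) − ∇f(x̄) + H(x̄ − x*)‖₂ ≤ ε. Then x* is an ε-stationary point of F = f + g, i.e., F'(x*; d) ≥ −ε‖d‖₂ for all d in the feasible cone of dom g at x*. -/
open scoped RealInnerProductSpace

open Filter Topology

lemma qexp {n : ℕ} {H : Matrix (Fin n) (Fin n) ℝ} (hsym : H.transpose = H)
    (z e : Fin n → ℝ) :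
    dotProduct (z + e) (H.mulVec (z + e))
      = dotProduct z (H.mulVec z) + 2 * dotProduct e (H.mulVec z)
        + dotProduct e (H.mulVec e) := by
  have hsw : dotProduct z (H.mulVec e) = dotProduct e (H.mulVec z) := by
    rw [Matrix.dotProduct_mulVec, ← Matrix.mulVec_transpose, hsym, dotProduct_comm]
  simp only [Matrix.mulVec_add, add_dotProduct, dotProduct_add, hsw]
  ring


/-- if `x* ∈ prox_g^H(x̄ − H⁻¹∇f(x̄))` and
`‖∇f(x*) − ∇f(x̄) + H(x̄ − x*)‖ ≤ ε`, then `x*` is an `ε`-stationary point of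
`F = f + g`: `F'(x*;d) = ∇f(x*)ᵀd + g'(x*;d) ≥ −ε‖d‖` for every direction `d` in the
feasible cone of `dom g` at `x*` (with `g'(x*;·)` the directional derivative). -/
theorem stmt19 {n : ℕ} (f : EuclideanSpace ℝ (Fin n) → ℝ)
    (g : EuclideanSpace ℝ (Fin n) → EReal)
    (gd : EuclideanSpace ℝ (Fin n) → EReal)
    (H : Matrix (Fin n) (Fin n) ℝ) (ε : ℝ)
    (xbar xstar : EuclideanSpace ℝ (Fin n))
    (hf : Differentiable ℝ f)
    (hg_proper : ∃ z, g z ≠ ⊤) (hg_nebot : ∀ z, g z ≠ ⊥)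
    (hg_closed : LowerSemicontinuous g)
    (hH : H.PosDef) (hε : 0 < ε)
    (hxstar : IsProxPt g H (xbar - toE (H⁻¹.mulVec fun i => gradient f xbar i)) xstar)
    (happrox : ‖gradient f xstar - gradient f xbar
      + toE (H.mulVec fun i => (xbar - xstar) i)‖ ≤ ε)
    (hgd : ∀ d : EuclideanSpace ℝ (Fin n),
      (∃ δ > (0:ℝ), ∀ η ∈ Set.Ioo (0:ℝ) δ, g (xstar + η • d) ≠ ⊤) →
      Tendsto (fun η : ℝ => ((η⁻¹ : ℝ) : EReal) * (g (xstar + η • d) - g xstar))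
        (𝓝[>] 0) (𝓝 (gd d))) :
    ∀ d : EuclideanSpace ℝ (Fin n),
      (∃ δ > (0:ℝ), ∀ η ∈ Set.Ioo (0:ℝ) δ, g (xstar + η • d) ≠ ⊤) →
      ((-(ε * ‖d‖) : ℝ) : EReal) ≤ ((⟪gradient f xstar, d⟫ : ℝ) : EReal) + gd d := by
  intro d hfeas
  obtain ⟨δ, hδ, hfin⟩ := hfeas
  have hsym : H.transpose = H := by
    have := hH.isHermitian
    simpa [Matrix.IsHermitian, Matrix.conjTranspose_eq_transpose_of_trivial] using this
  -- g xstar is finite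
  obtain ⟨z, hz⟩ := hg_proper
  have hx_ne_top : g xstar ≠ ⊤ := by
    intro htop
    have h1 := hxstar z
    rw [htop] at h1
    have hzr : g z = ((g z).toReal : EReal) := (EReal.coe_toReal hz (hg_nebot _)).symm
    rw [EReal.top_add_of_ne_bot (EReal.coe_ne_bot _), hzr, ← EReal.coe_add] at h1
    exact EReal.coe_ne_top _ (top_le_iff.mp h1)
  set b : ℝ := (g xstar).toReal with hb
  have hgb : g xstar = (b : EReal) := (EReal.coe_toReal hx_ne_top (hg_nebot _)).symm
  set u : EuclideanSpace ℝ (Fin n) :=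
    xbar - toE (H⁻¹.mulVec fun i => gradient f xbar i) with hu
  set w : Fin n → ℝ := fun i => (xstar - u) i with hw
  set dv : Fin n → ℝ := fun i => d i with hdv
  set c' : ℝ := dotProduct dv (H.mulVec w) with hc'
  set M : ℝ := dotProduct dv (H.mulVec dv) with hM
  -- key pointwise inequality
  have key : ∀ η ∈ Set.Ioo (0:ℝ) δ,
      ((-c' - η/2*M : ℝ) : EReal)
        ≤ ((η⁻¹ : ℝ) : EReal) * (g (xstar + η • d) - g xstar) := by
    intro η hη
    obtain ⟨hη0, hηδ⟩ := hη
    have hfinη := hfin η ⟨hη0, hηδ⟩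
    set a : ℝ := (g (xstar + η • d)).toReal with ha
    have hga : g (xstar + η • d) = (a : EReal) :=
      (EReal.coe_toReal hfinη (hg_nebot _)).symm
    have h1 := hxstar (xstar + η • d)
    rw [hgb, hga] at h1
    have hvec : (fun i => (xstar + η • d - u) i) = w + η • dv := by
      funext i
      simp [hw, hdv, PiLp.sub_apply, PiLp.add_apply, PiLp.smul_apply, smul_eq_mul]
      ring
    have hq : qnorm H (xstar + η • d - u) = qnorm H (xstar - u) + 2 * (η * c') + η^2 * M := by
      have : qnorm H (xstar + η • d - u)
          = dotProduct (w + η • dv) (H.mulVec (w + η • dv)) := by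
        rw [qnorm, hvec]
      rw [this, qexp hsym]
      have h2 : dotProduct (η • dv) (H.mulVec w) = η * c' := by
        rw [smul_dotProduct, hc']; simp [smul_eq_mul]
      have h3 : dotProduct (η • dv) (H.mulVec (η • dv)) = η^2 * M := by
        rw [smul_dotProduct, Matrix.mulVec_smul, dotProduct_smul, hM]
        simp [smul_eq_mul]; ring
      rw [h2, h3, qnorm, hw]
    rw [hq] at h1
    rw [← EReal.coe_add, ← EReal.coe_add, EReal.coe_le_coe_iff] at h1
    -- h1 : b + 1/2 * Q ≤ a + 1/2 * (Q + 2ηc' + η²M)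
    have hreal : -c' - η/2*M ≤ η⁻¹ * (a - b) := by
      rw [le_inv_mul_iff₀ hη0]
      nlinarith [h1]
    calc ((-c' - η/2*M : ℝ) : EReal) ≤ ((η⁻¹ * (a - b) : ℝ) : EReal) :=
          EReal.coe_le_coe_iff.mpr hreal
      _ = ((η⁻¹ : ℝ) : EReal) * (g (xstar + η • d) - g xstar) := by
          rw [hgb, hga, ← EReal.coe_sub, ← EReal.coe_mul]
  have hmono : ∀ᶠ η in 𝓝[>] (0:ℝ),
      ((-c' - η/2*M : ℝ) : EReal)
        ≤ ((η⁻¹ : ℝ) : EReal) * (g (xstar + η • d) - g xstar) := by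
    filter_upwards [Ioo_mem_nhdsGT_of_mem (Set.mem_Ico.mpr ⟨le_refl 0, hδ⟩)] with η hη
    exact key η hη
  have hlim1 : Tendsto (fun η : ℝ => ((-c' - η/2*M : ℝ) : EReal)) (𝓝[>] (0:ℝ))
      (𝓝 ((-c' : ℝ) : EReal)) := by
    rw [EReal.tendsto_coe]
    have hc : Continuous (fun η : ℝ => -c' - η/2*M) :=
      continuous_const.sub ((continuous_id.div_const 2).mul continuous_const)
    have : Tendsto (fun η : ℝ => -c' - η/2*M) (𝓝 0) (𝓝 (-c' - 0/2*M)) := hc.tendsto 0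
    simpa using this.mono_left nhdsWithin_le_nhds
  have hcle : ((-c' : ℝ) : EReal) ≤ gd d :=
    le_of_tendsto_of_tendsto hlim1 (hgd d ⟨δ, hδ, hfin⟩) hmono
  -- the approximate gradient vector
  set v : EuclideanSpace ℝ (Fin n) := gradient f xstar - gradient f xbar
      + toE (H.mulVec fun i => (xbar - xstar) i) with hv
  -- H applied to w equals H(x*-x̄)+∇f(x̄)
  have hHinv : ∀ vv : Fin n → ℝ, H.mulVec (H⁻¹.mulVec vv) = vv := by
    intro vv
    rw [Matrix.mulVec_mulVec, Matrix.mul_nonsing_inv H (isUnit_iff_ne_zero.mpr hH.det_pos.ne')]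
    simp
  have hHw : H.mulVec w = fun i => gradient f xstar i - v i := by
    have hwi : w = (fun i => xstar i - xbar i) + H⁻¹.mulVec (fun i => gradient f xbar i) := by
      funext i
      simp [hw, hu, toE, PiLp.sub_apply]
      ring
    funext i
    have hHm := congrFun (hHinv (fun i => gradient f xbar i)) i
    rw [hwi, Matrix.mulVec_add]
    simp only [Pi.add_apply]
    rw [hHm]
    simp only [hv, PiLp.add_apply, PiLp.sub_apply, toE, WithLp.equiv_symm_apply, PiLp.toLp_apply]
    have harg : (fun i : Fin n => xbar i - xstar i) = -(fun i : Fin n => xstar i - xbar i) := by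
      funext j; simp only [Pi.neg_apply]; ring
    rw [harg, Matrix.mulVec_neg]
    simp only [Pi.neg_apply]
    ring
  have hinner : ⟪v, d⟫ = ⟪gradient f xstar, d⟫ - c' := by
    rw [PiLp.inner_apply, PiLp.inner_apply, hc']
    have : dotProduct dv (H.mulVec w) = dotProduct (H.mulVec w) dv :=
      dotProduct_comm _ _
    rw [this, dotProduct, ← Finset.sum_sub_distrib]
    apply Finset.sum_congr rfl
    intro i _
    have := congrFun hHw i
    simp only [RCLike.inner_apply, conj_trivial, this, hdv]
    ring
  have hfinal : -(ε * ‖d‖) ≤ ⟪gradient f xstar, d⟫ - c' := by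
    rw [← hinner]
    have h1 : -(‖v‖ * ‖d‖) ≤ ⟪v, d⟫ := neg_le_of_abs_le (abs_real_inner_le_norm v d)
    have h2 : ‖v‖ * ‖d‖ ≤ ε * ‖d‖ := mul_le_mul_of_nonneg_right happrox (norm_nonneg d)
    linarith
  calc ((-(ε * ‖d‖) : ℝ) : EReal) ≤ ((⟪gradient f xstar, d⟫ - c' : ℝ) : EReal) :=
        EReal.coe_le_coe_iff.mpr hfinal
    _ = ((⟪gradient f xstar, d⟫ : ℝ) : EReal) + ((-c' : ℝ) : EReal) := by
        rw [sub_eq_add_neg, EReal.coe_add]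
    _ ≤ ((⟪gradient f xstar, d⟫ : ℝ) : EReal) + gd d := add_le_add_right hcle _
end
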